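/- Let T be a binary search tree, let x be any node of T, let k ≥ 1 be an integer, and let T' be the tree obtained from T by applying Balance(x, k). Then: (1) h(T') ≤ h(T) + 1; and (2) for every node z of T' that is a T'-descendant of x with d_{T'}(z) = d_T(x) + k + 1, the subtree of T' rooted at z has size at most |T_x| / 2^k, where T_x is the subtree of T rooted at x and |·| denotes the number of nodes. -/

import Mathlib

attribute [local instance] Classical.propDecidable

/-- A binary tree with real-number node values. -/
inductive BT : Type
  | leaf : BT
  | node : BT → ℝ → BT → BT

namespace BT

/-- The set of values stored in the tree. -/
noncomputable def nodes : BT → Finset ℝ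
  | .leaf => ∅
  | .node l v r => insert v (nodes l ∪ nodes r)

/-- The signature of `x` in the tree: the bit string of the search path for `x`
(`false` = step to a left child, `true` = step to a right child). For a node `x` of the
tree, its length is the depth `d_T(x)`. -/
noncomputable def sig : BT → ℝ → List Bool
  | .leaf, _ => []
  | .node l v r, x =>
    if x < v then false :: sig l x
    else if v < x then true :: sig r x
    else []

/-- The number of nodes of the tree. -/
def size : BT → ℕ
  | .leaf => 0
  | .node l _ r => size l + size r + 1

/-- The binary-search-tree property: all values in a left subtree are smaller than the
value at the node, all values in a right subtree are larger. -/
def isBST : BT → Prop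
  | .leaf => True
  | .node l v r => (∀ x ∈ nodes l, x < v) ∧ (∀ x ∈ nodes r, v < x) ∧ isBST l ∧ isBST r

/-- The height of the tree: the maximum depth of a node (0 for the empty tree). -/
noncomputable def height (t : BT) : ℕ := (nodes t).sup fun x => (sig t x).length

/-- The subtree rooted at the node holding the value `x` (a leaf if `x` is absent). -/
noncomputable def subtreeAt : BT → ℝ → BT
  | .leaf, _ => .leaf
  | .node l v r, x =>
    if x < v then subtreeAt l x
    else if v < x then subtreeAt r x
    else .node l v r

end BT

namespace BT

/-- `Split(x)`: split a binary search tree along the search path of `x` into the two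
binary search trees on `{z ∈ V(T) : z < x}` and `{z ∈ V(T) : z > x}`. -/
noncomputable def split : BT → ℝ → BT × BT
  | .leaf, _ => (.leaf, .leaf)
  | .node l v r, x =>
    if x < v then
      ((split l x).1, .node (split l x).2 v r)
    else if v < x then
      (.node l v (split r x).1, (split r x).2)
    else (l, r)

end BT

namespace BT

/-- In-order (sorted, for a binary search tree) list of the values in the tree. -/
def inorder : BT → List ℝ
  | .leaf => []
  | .node l v r => inorder l ++ v :: inorder r

/-- `MultiSplit`: split a tree at an increasing list of values by splitting at the
median value and recursing on both sides; returns the ordered list of resulting trees. -/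
noncomputable def multiSplit : BT → List ℝ → List BT
  | t, [] => [t]
  | t, x₀ :: xs' =>
    multiSplit (split t ((x₀ :: xs').getD (((x₀ :: xs').length + 1) / 2 - 1) 0)).1
        ((x₀ :: xs').take (((x₀ :: xs').length + 1) / 2 - 1)) ++
    multiSplit (split t ((x₀ :: xs').getD (((x₀ :: xs').length + 1) / 2 - 1) 0)).2
        ((x₀ :: xs').drop (((x₀ :: xs').length + 1) / 2))
termination_by _ xs => xs.length
decreasing_by
  · simp [List.length_take]; omega
  · simp [List.length_drop]; omega

/-- Replace the external (leaf) positions of a tree, from left to right, by the trees of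
the given list (this is the order consistent with the binary search tree property);
also returns the unused trees of the list. -/
def glue : BT → List BT → BT × List BT
  | .leaf, ts => (ts.headD .leaf, ts.tail)
  | .node l v r, ts =>
    ((.node (glue l ts).1 v (glue r (glue l ts).2).1), (glue r (glue l ts).2).2)

/-- The ordered list of subtrees hanging below depth `k`: one (possibly empty) tree for
each gap between consecutive nodes of depth `< k`; these are the trees of the forest
`T − Z` where `Z` is the set of nodes of depth `< k`. -/
def slots : ℕ → BT → List BT
  | 0, t => [t]
  | _ + 1, .leaf => [.leaf]
  | k + 1, .node l _ r => slots k l ++ slots k r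

/-- The set `Z` of nodes of the tree of depth less than `k`. -/
noncomputable def shallowNodes (t : BT) (k : ℕ) : Finset ℝ :=
  (nodes t).filter fun x => (sig t x).length < k

/-- The list `X = x_1, …, x_{2^k − 1}` where `x_j` is the element of rank
`⌊j·|t| / 2^k⌋` in the sorted order of the values of `t`. -/
noncomputable def rankElems (t : BT) (k : ℕ) : List ℝ :=
  (List.range (2 ^ k - 1)).map fun j => (inorder t).getD ((j + 1) * size t / 2 ^ k) 0

/-- The ordered list of trees obtained by applying `MultiSplit` to each tree of the
forest `t − Z`, each with the increasing list of the elements of `X` it contains. -/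
noncomputable def balParts (t : BT) (k : ℕ) : List BT :=
  (slots k t).flatMap fun ti =>
    multiSplit ti ((inorder ti).filter fun x => x ∈ rankElems t k)

/-- `t` is a perfectly balanced binary search tree on the finite set `s`: its height
equals `⌊log₂ |t|⌋`. -/
def IsPerfBalBST (s : Finset ℝ) (t : BT) : Prop :=
  isBST t ∧ nodes t = s ∧ height t = Nat.log 2 (size t)

/-- `IsBalanceResult k tx s'` : `s'` is a possible result of applying `Balance(·, k)` to
the (sub)tree `tx`: if `|tx| < 2^k`, `s'` is a perfectly balanced binary search tree on
the values of `tx`; otherwise `s'` is obtained by attaching, at the external positions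
of a perfectly balanced binary search tree on `Z ∪ X`, the trees obtained by the
`MultiSplit`s of the trees of the forest `tx − Z`. -/
def IsBalanceResult (k : ℕ) (tx : BT) (s' : BT) : Prop :=
  if size tx < 2 ^ k then IsPerfBalBST (nodes tx) s'
  else
    ∃ t0 : BT,
      IsPerfBalBST (shallowNodes tx k ∪ (rankElems tx k).toFinset) t0 ∧
      s' = (glue t0 (balParts tx k)).1

/-- Replace the subtree rooted at the node holding `x` by `s`. -/
noncomputable def replaceAt : BT → ℝ → BT → BT
  | .leaf, _, _ => .leaf
  | .node l v r, x, s =>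
    if x < v then .node (replaceAt l x s) v r
    else if v < x then .node l v (replaceAt r x s)
    else s

/-- `BalanceRel t x k t'` : `t'` is a possible result of applying `Balance(x, k)` to `t`,
i.e. of replacing the subtree of `t` rooted at `x` by a result of `Balance(·, k)`. -/
def BalanceRel (t : BT) (x : ℝ) (k : ℕ) (t' : BT) : Prop :=
  ∃ s' : BT, IsBalanceResult k (subtreeAt t x) s' ∧ t' = replaceAt t x s'

/-- `BulkBalanceRel k θ t t'` : `t'` is a possible result of applying `BulkBalance(θ, k)`
to `t`, i.e. of applying `Balance(x, k)` to every node `x` of depth `θ` in `t` (a no-op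
if there is no such node). -/
def BulkBalanceRel (k : ℕ) : ℕ → BT → BT → Prop
  | 0, t, t' => (t = .leaf ∧ t' = .leaf) ∨ IsBalanceResult k t t'
  | _ + 1, .leaf, t' => t' = .leaf
  | θ + 1, .node l v r, t' =>
      ∃ l' r' : BT, BulkBalanceRel k θ l l' ∧ BulkBalanceRel k θ r r' ∧ t' = .node l' v r'

end BT

namespace BT

attribute [simp] nodes size isBST inorder

@[simp] lemma nodes_leaf : nodes .leaf = ∅ := rfl
@[simp] lemma nodes_node (l : BT) (v : ℝ) (r : BT) :
    nodes (.node l v r) = insert v (nodes l ∪ nodes r) := rfl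

lemma nodes_eq_empty_iff {t : BT} : nodes t = ∅ ↔ t = .leaf := by
  cases t with
  | leaf => simp
  | node l v r => simp [nodes]

lemma sig_node_self (l : BT) (v : ℝ) (r : BT) : sig (.node l v r) v = [] := by
  simp [sig]

lemma sig_node_lt {l : BT} {v : ℝ} {r : BT} {z : ℝ} (h : z < v) :
    sig (.node l v r) z = false :: sig l z := by
  simp [sig, h]

lemma sig_node_gt {l : BT} {v : ℝ} {r : BT} {z : ℝ} (h : v < z) :
    sig (.node l v r) z = true :: sig r z := by
  simp [sig, h, asymm h]

lemma isBST_node {l : BT} {v : ℝ} {r : BT} (h : isBST (.node l v r)) :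
    (∀ x ∈ nodes l, x < v) ∧ (∀ x ∈ nodes r, v < x) ∧ isBST l ∧ isBST r := h

lemma sig_length_le_height {t : BT} {z : ℝ} (hz : z ∈ nodes t) :
    (sig t z).length ≤ height t := Finset.le_sup (f := fun x => (sig t x).length) hz

lemma height_le {t : BT} {m : ℕ} (h : ∀ z ∈ nodes t, (sig t z).length ≤ m) :
    height t ≤ m := Finset.sup_le h

@[simp] lemma height_leaf : height .leaf = 0 := by simp [height]

lemma height_node_le {l : BT} {v : ℝ} {r : BT} (h : isBST (.node l v r)) {m : ℕ}
    (hl : height l ≤ m) (hr : height r ≤ m) : height (.node l v r) ≤ m + 1 := by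
  apply height_le
  intro z hz
  simp only [nodes_node, Finset.mem_insert, Finset.mem_union] at hz
  rcases hz with rfl | hz | hz
  · simp [sig_node_self]
  · rw [sig_node_lt (h.1 z hz)]
    simpa using Nat.add_le_add_right (le_trans (sig_length_le_height hz) hl) 1
  · rw [sig_node_gt (h.2.1 z hz)]
    simpa using Nat.add_le_add_right (le_trans (sig_length_le_height hz) hr) 1

lemma height_left_lt {l : BT} {v : ℝ} {r : BT} (h : isBST (.node l v r)) (hl : l ≠ .leaf) :
    height l + 1 ≤ height (.node l v r) := by
  have hne : (nodes l).Nonempty := by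
    rcases Finset.eq_empty_or_nonempty (nodes l) with he | hne
    · exact absurd (nodes_eq_empty_iff.1 he) hl
    · exact hne
  obtain ⟨z, hz, hzs⟩ := Finset.exists_mem_eq_sup (nodes l) hne (fun x => (sig l x).length)
  have : (sig (.node l v r) z).length = height l + 1 := by
    rw [sig_node_lt (h.1 z hz)]; simp [height, hzs]
  calc height l + 1 = (sig (.node l v r) z).length := this.symm
    _ ≤ _ := sig_length_le_height (by simp [hz])

lemma height_right_lt {l : BT} {v : ℝ} {r : BT} (h : isBST (.node l v r)) (hr : r ≠ .leaf) :
    height r + 1 ≤ height (.node l v r) := by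
  have hne : (nodes r).Nonempty := by
    rcases Finset.eq_empty_or_nonempty (nodes r) with he | hne
    · exact absurd (nodes_eq_empty_iff.1 he) hr
    · exact hne
  obtain ⟨z, hz, hzs⟩ := Finset.exists_mem_eq_sup (nodes r) hne (fun x => (sig r x).length)
  have : (sig (.node l v r) z).length = height r + 1 := by
    rw [sig_node_gt (h.2.1 z hz)]; simp [height, hzs]
  calc height r + 1 = (sig (.node l v r) z).length := this.symm
    _ ≤ _ := sig_length_le_height (by simp [hz])

end BT
namespace BT

lemma bst_disj {l : BT} {v : ℝ} {r : BT} (h : isBST (.node l v r)) :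
    v ∉ nodes l ∧ v ∉ nodes r ∧ ∀ z ∈ nodes l, z ∉ nodes r := by
  refine ⟨fun hv => absurd (h.1 v hv) (lt_irrefl v),
    fun hv => absurd (h.2.1 v hv) (lt_irrefl v),
    fun z hzl hzr => absurd (lt_trans (h.1 z hzl) (h.2.1 z hzr)) (lt_irrefl z)⟩

lemma size_eq_card {t : BT} (h : isBST t) : size t = (nodes t).card := by
  induction t with
  | leaf => simp
  | node l v r ihl ihr =>
    obtain ⟨hv1, hv2, hd⟩ := bst_disj h
    rw [nodes_node, Finset.card_insert_of_notMem (by simp [hv1, hv2]),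
      Finset.card_union_of_disjoint (Finset.disjoint_left.2 hd)]
    simp [size, ihl h.2.2.1, ihr h.2.2.2]

lemma size_lt_two_pow {t : BT} (h : isBST t) : size t < 2 ^ (height t + 1) := by
  induction t with
  | leaf => simp [size]
  | node l v r ihl ihr =>
    have hl' := ihl h.2.2.1
    have hr' := ihr h.2.2.2
    by_cases hl : l = .leaf
    · by_cases hr : r = .leaf
      · subst hl; subst hr; simp [size]
      · have h2 := height_right_lt h hr
        have : size r < 2 ^ (height (BT.node l v r)) := by
          calc size r < 2 ^ (height r + 1) := hr'
          _ ≤ 2 ^ height (BT.node l v r) := Nat.pow_le_pow_right (by norm_num) h2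
        subst hl
        have hp : 1 ≤ 2 ^ height (BT.node BT.leaf v r) := Nat.one_le_two_pow
        simp only [size, pow_succ]
        omega
    · by_cases hr : r = .leaf
      · have h2 := height_left_lt h hl
        have : size l < 2 ^ (height (BT.node l v r)) :=
          calc size l < 2 ^ (height l + 1) := hl'
          _ ≤ 2 ^ height (BT.node l v r) := Nat.pow_le_pow_right (by norm_num) h2
        subst hr
        have hp : 1 ≤ 2 ^ height (BT.node l v BT.leaf) := Nat.one_le_two_pow
        simp only [size, pow_succ]
        omega
      · have h2 := height_left_lt h hl
        have h3 := height_right_lt h hr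
        have hsl : size l < 2 ^ (height (BT.node l v r)) :=
          calc size l < 2 ^ (height l + 1) := hl'
          _ ≤ _ := Nat.pow_le_pow_right (by norm_num) h2
        have hsr : size r < 2 ^ (height (BT.node l v r)) :=
          calc size r < 2 ^ (height r + 1) := hr'
          _ ≤ _ := Nat.pow_le_pow_right (by norm_num) h3
        simp only [size, pow_succ]
        omega

lemma log_size_le_height {t : BT} (h : isBST t) : Nat.log 2 (size t) ≤ height t := by
  rcases Nat.eq_zero_or_pos (size t) with h0 | h0
  · simp [h0]
  · have := size_lt_two_pow h
    have := Nat.log_lt_of_lt_pow (Nat.pos_iff_ne_zero.mp h0) this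
    omega

lemma subtreeAt_self (l : BT) (v : ℝ) (r : BT) :
    subtreeAt (.node l v r) v = .node l v r := by
  rw [subtreeAt]; simp

lemma subtreeAt_lt {l : BT} {v x : ℝ} {r : BT} (h : x < v) :
    subtreeAt (.node l v r) x = subtreeAt l x := by
  rw [subtreeAt, if_pos h]

lemma subtreeAt_gt {l : BT} {v x : ℝ} {r : BT} (h : v < x) :
    subtreeAt (.node l v r) x = subtreeAt r x := by
  rw [subtreeAt, if_neg (asymm h), if_pos h]

lemma nodes_subtreeAt_subset (t : BT) (x : ℝ) : nodes (subtreeAt t x) ⊆ nodes t := by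
  induction t with
  | leaf => simp [subtreeAt]
  | node l v r ihl ihr =>
    rw [subtreeAt]
    split
    · exact ihl.trans (by intro z hz; simp [hz])
    · split
      · exact ihr.trans (by intro z hz; simp [hz])
      · exact subset_rfl

lemma isBST_subtreeAt {t : BT} (h : isBST t) (x : ℝ) : isBST (subtreeAt t x) := by
  induction t with
  | leaf => simpa [subtreeAt] using h
  | node l v r ihl ihr =>
    rw [subtreeAt]
    split
    · exact ihl h.2.2.1
    · split
      · exact ihr h.2.2.2
      · exact h

lemma mem_subtreeAt {t : BT} (h : isBST t) {x : ℝ} (hx : x ∈ nodes t) :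
    x ∈ nodes (subtreeAt t x) := by
  induction t with
  | leaf => simp at hx
  | node l v r ihl ihr =>
    rw [subtreeAt]
    rcases lt_trichotomy x v with hlt | rfl | hgt
    · rw [if_pos hlt]
      apply ihl h.2.2.1
      simp only [nodes_node, Finset.mem_insert, Finset.mem_union] at hx
      rcases hx with rfl | hx | hx
      · exact absurd hlt (lt_irrefl x)
      · exact hx
      · exact absurd (h.2.1 x hx) (asymm hlt)
    · simp
    · rw [if_neg (asymm hgt), if_pos hgt]
      apply ihr h.2.2.2
      simp only [nodes_node, Finset.mem_insert, Finset.mem_union] at hx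
      rcases hx with rfl | hx | hx
      · exact absurd hgt (lt_irrefl x)
      · exact absurd (h.1 x hx) (asymm hgt)
      · exact hx

lemma sig_append_subtreeAt {t : BT} (h : isBST t) {x : ℝ} (hx : x ∈ nodes t)
    {z : ℝ} (hz : z ∈ nodes (subtreeAt t x)) :
    sig t z = sig t x ++ sig (subtreeAt t x) z := by
  induction t with
  | leaf => simp at hx
  | node l v r ihl ihr =>
    rcases lt_trichotomy x v with hlt | rfl | hgt
    · rw [subtreeAt_lt hlt] at hz
      have hxl : x ∈ nodes l := by
        simp only [nodes_node, Finset.mem_insert, Finset.mem_union] at hx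
        rcases hx with rfl | hx | hx
        · exact absurd hlt (lt_irrefl x)
        · exact hx
        · exact absurd (h.2.1 x hx) (asymm hlt)
      have hzl : z ∈ nodes l := nodes_subtreeAt_subset l x hz
      rw [sig_node_lt (h.1 z hzl), sig_node_lt hlt, subtreeAt_lt hlt, List.cons_append]
      exact congrArg _ (ihl h.2.2.1 hxl hz)
    · rw [subtreeAt_self, sig_node_self, List.nil_append]
    · rw [subtreeAt_gt hgt] at hz
      have hxr : x ∈ nodes r := by
        simp only [nodes_node, Finset.mem_insert, Finset.mem_union] at hx
        rcases hx with rfl | hx | hx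
        · exact absurd hgt (lt_irrefl x)
        · exact absurd (h.1 x hx) (asymm hgt)
        · exact hx
      have hzr : z ∈ nodes r := nodes_subtreeAt_subset r x hz
      rw [sig_node_gt (h.2.1 z hzr), sig_node_gt hgt, subtreeAt_gt hgt, List.cons_append]
      exact congrArg _ (ihr h.2.2.2 hxr hz)

lemma prefix_iff_mem_subtreeAt {t : BT} (h : isBST t) {x : ℝ} (hx : x ∈ nodes t)
    {z : ℝ} (hz : z ∈ nodes t) :
    sig t x <+: sig t z ↔ z ∈ nodes (subtreeAt t x) := by
  induction t with
  | leaf => simp at hx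
  | node l v r ihl ihr =>
    rcases lt_trichotomy x v with hlt | rfl | hgt
    · have hxl : x ∈ nodes l := by
        simp only [nodes_node, Finset.mem_insert, Finset.mem_union] at hx
        rcases hx with rfl | hx | hx
        · exact absurd hlt (lt_irrefl x)
        · exact hx
        · exact absurd (h.2.1 x hx) (asymm hlt)
      rw [subtreeAt_lt hlt, sig_node_lt hlt]
      simp only [nodes_node, Finset.mem_insert, Finset.mem_union] at hz
      rcases hz with rfl | hz | hz
      · rw [sig_node_self]
        simp only [List.prefix_nil]
        constructor
        · intro hc; exact absurd hc (by simp)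
        · intro hc; exact absurd (h.1 z (nodes_subtreeAt_subset l x hc)) (lt_irrefl z)
      · rw [sig_node_lt (h.1 z hz), List.cons_prefix_cons]
        simp only [true_and]
        exact ihl h.2.2.1 hxl hz
      · rw [sig_node_gt (h.2.1 z hz), List.cons_prefix_cons]
        constructor
        · rintro ⟨hc, -⟩; exact absurd hc (by simp)
        · intro hc
          exact absurd (lt_trans (h.1 z (nodes_subtreeAt_subset l x hc)) (h.2.1 z hz))
            (lt_irrefl z)
    · rw [subtreeAt_self, sig_node_self]
      simp only [List.nil_prefix, true_iff]
      exact hz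
    · have hxr : x ∈ nodes r := by
        simp only [nodes_node, Finset.mem_insert, Finset.mem_union] at hx
        rcases hx with rfl | hx | hx
        · exact absurd hgt (lt_irrefl x)
        · exact absurd (h.1 x hx) (asymm hgt)
        · exact hx
      rw [subtreeAt_gt hgt, sig_node_gt hgt]
      simp only [nodes_node, Finset.mem_insert, Finset.mem_union] at hz
      rcases hz with rfl | hz | hz
      · rw [sig_node_self]
        simp only [List.prefix_nil]
        constructor
        · intro hc; exact absurd hc (by simp)
        · intro hc; exact absurd (h.2.1 z (nodes_subtreeAt_subset r x hc)) (lt_irrefl z)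
      · rw [sig_node_lt (h.1 z hz), List.cons_prefix_cons]
        constructor
        · rintro ⟨hc, -⟩; exact absurd hc (by simp)
        · intro hc
          exact absurd (lt_trans (h.1 z hz) (h.2.1 z (nodes_subtreeAt_subset r x hc)))
            (lt_irrefl z)
      · rw [sig_node_gt (h.2.1 z hz), List.cons_prefix_cons]
        simp only [true_and]
        exact ihr h.2.2.2 hxr hz

lemma size_subtreeAt_le (t : BT) (x : ℝ) : size (subtreeAt t x) ≤ size t := by
  induction t with
  | leaf => simp [subtreeAt]
  | node l v r ihl ihr =>
    rw [subtreeAt]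
    split
    · simp only [size]; omega
    · split
      · simp only [size]; omega
      · exact le_rfl

end BT
namespace BT

lemma replaceAt_self (l : BT) (v : ℝ) (r : BT) (s : BT) :
    replaceAt (.node l v r) v s = s := by
  rw [replaceAt]; simp

lemma replaceAt_lt {l : BT} {v x : ℝ} {r : BT} (h : x < v) (s : BT) :
    replaceAt (.node l v r) x s = .node (replaceAt l x s) v r := by
  rw [replaceAt, if_pos h]

lemma replaceAt_gt {l : BT} {v x : ℝ} {r : BT} (h : v < x) (s : BT) :
    replaceAt (.node l v r) x s = .node l v (replaceAt r x s) := by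
  rw [replaceAt, if_neg (asymm h), if_pos h]

lemma mem_left_of_lt {l : BT} {v x : ℝ} {r : BT} (h : isBST (.node l v r))
    (hx : x ∈ nodes (.node l v r)) (hlt : x < v) : x ∈ nodes l := by
  simp only [nodes_node, Finset.mem_insert, Finset.mem_union] at hx
  rcases hx with rfl | hx | hx
  · exact absurd hlt (lt_irrefl x)
  · exact hx
  · exact absurd (h.2.1 x hx) (asymm hlt)

lemma mem_right_of_gt {l : BT} {v x : ℝ} {r : BT} (h : isBST (.node l v r))
    (hx : x ∈ nodes (.node l v r)) (hgt : v < x) : x ∈ nodes r := by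
  simp only [nodes_node, Finset.mem_insert, Finset.mem_union] at hx
  rcases hx with rfl | hx | hx
  · exact absurd hgt (lt_irrefl x)
  · exact absurd (h.1 x hx) (asymm hgt)
  · exact hx

lemma replace_spec {t : BT} (h : isBST t) {x : ℝ} (hx : x ∈ nodes t) {s' : BT}
    (hs : isBST s') (hn : nodes s' = nodes (subtreeAt t x)) :
    nodes (replaceAt t x s') = nodes t ∧ isBST (replaceAt t x s') ∧
    (∀ z ∈ nodes s', sig (replaceAt t x s') z = sig t x ++ sig s' z ∧
      subtreeAt (replaceAt t x s') z = subtreeAt s' z) ∧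
    (∀ z ∈ nodes t, z ∉ nodes s' → sig (replaceAt t x s') z = sig t z) := by
  induction t with
  | leaf => simp at hx
  | node l v r ihl ihr =>
    rcases lt_trichotomy x v with hlt | rfl | hgt
    · have hxl : x ∈ nodes l := mem_left_of_lt h hx hlt
      rw [subtreeAt_lt hlt] at hn
      obtain ⟨ih1, ih2, ih3, ih4⟩ := ihl h.2.2.1 hxl hn
      rw [replaceAt_lt hlt]
      have hsub : nodes s' ⊆ nodes l := hn ▸ nodes_subtreeAt_subset l x
      refine ⟨by simp [ih1], ⟨by rw [ih1]; exact h.1, h.2.1, ih2, h.2.2.2⟩, ?_, ?_⟩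
      · intro z hz
        have hzl : z ∈ nodes l := hsub hz
        have hzlt : z < v := h.1 z hzl
        rw [sig_node_lt hzlt, sig_node_lt hlt, subtreeAt_lt hzlt, List.cons_append]
        exact ⟨congrArg _ (ih3 z hz).1, (ih3 z hz).2⟩
      · intro z hz hzs
        simp only [nodes_node, Finset.mem_insert, Finset.mem_union] at hz
        rcases hz with rfl | hz | hz
        · rw [sig_node_self, sig_node_self]
        · rw [sig_node_lt (h.1 z hz), sig_node_lt (h.1 z hz), ih4 z hz hzs]
        · rw [sig_node_gt (h.2.1 z hz), sig_node_gt (h.2.1 z hz)]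
    · rw [replaceAt_self, subtreeAt_self] at *
      refine ⟨hn, hs, ?_, ?_⟩
      · intro z hz
        rw [sig_node_self, List.nil_append]
        exact ⟨rfl, rfl⟩
      · intro z hz hzs
        exact absurd (hn ▸ hz) hzs
    · have hxr : x ∈ nodes r := mem_right_of_gt h hx hgt
      rw [subtreeAt_gt hgt] at hn
      obtain ⟨ih1, ih2, ih3, ih4⟩ := ihr h.2.2.2 hxr hn
      rw [replaceAt_gt hgt]
      have hsub : nodes s' ⊆ nodes r := hn ▸ nodes_subtreeAt_subset r x
      refine ⟨by simp [ih1], ⟨h.1, by rw [ih1]; exact h.2.1, h.2.2.1, ih2⟩, ?_, ?_⟩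
      · intro z hz
        have hzr : z ∈ nodes r := hsub hz
        have hzgt : v < z := h.2.1 z hzr
        rw [sig_node_gt hzgt, sig_node_gt hgt, subtreeAt_gt hzgt, List.cons_append]
        exact ⟨congrArg _ (ih3 z hz).1, (ih3 z hz).2⟩
      · intro z hz hzs
        simp only [nodes_node, Finset.mem_insert, Finset.mem_union] at hz
        rcases hz with rfl | hz | hz
        · rw [sig_node_self, sig_node_self]
        · rw [sig_node_lt (h.1 z hz), sig_node_lt (h.1 z hz)]
        · rw [sig_node_gt (h.2.1 z hz), sig_node_gt (h.2.1 z hz), ih4 z hz hzs]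

lemma depth_add_height_le {t : BT} (h : isBST t) {x : ℝ} (hx : x ∈ nodes t) :
    (sig t x).length + height (subtreeAt t x) ≤ height t := by
  have hne : (nodes (subtreeAt t x)).Nonempty := ⟨x, mem_subtreeAt h hx⟩
  obtain ⟨z, hz, hzs⟩ := Finset.exists_mem_eq_sup _ hne
    (fun w => (sig (subtreeAt t x) w).length)
  have h1 : sig t z = sig t x ++ sig (subtreeAt t x) z := sig_append_subtreeAt h hx hz
  have h2 : (sig t z).length ≤ height t :=
    sig_length_le_height (nodes_subtreeAt_subset t x hz)
  rw [h1] at h2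
  simp only [List.length_append] at h2
  have : height (subtreeAt t x) = (sig (subtreeAt t x) z).length := hzs
  omega

end BT
namespace BT

lemma sort_split {A B : Finset ℝ} {v : ℝ} (hA : ∀ a ∈ A, a < v) (hB : ∀ b ∈ B, v < b) :
    (insert v (A ∪ B)).sort (· ≤ ·) = A.sort (· ≤ ·) ++ v :: B.sort (· ≤ ·) := by
  refine (fun hp h1 h2 => List.Perm.eq_of_pairwise' (r := (· ≤ ·)) h1 h2 hp) ?_ ?_ ?_
  · apply (List.perm_ext_iff_of_nodup (Finset.sort_nodup _ _) ?_).2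
    · intro z
      simp only [Finset.mem_sort, Finset.mem_insert, Finset.mem_union, List.mem_append,
        List.mem_cons]
      tauto
    · rw [List.nodup_append]
      refine ⟨Finset.sort_nodup _ _, ?_, ?_⟩
      · rw [List.nodup_cons]
        refine ⟨fun hv => absurd (hB v (by simpa using hv)) (lt_irrefl v),
          Finset.sort_nodup _ _⟩
      · intro a ha b hb hab
        subst hab
        simp only [Finset.mem_sort] at ha
        rcases List.mem_cons.1 hb with rfl | hb
        · exact absurd (hA a ha) (lt_irrefl a)
        · simp only [Finset.mem_sort] at hb
          exact absurd (lt_trans (hA a ha) (hB a hb)) (lt_irrefl a)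
  · exact Finset.pairwise_sort _ _
  · rw [List.pairwise_append]
    refine ⟨Finset.pairwise_sort _ _, ?_, ?_⟩
    · rw [List.pairwise_cons]
      exact ⟨fun b hb => le_of_lt (hB b (by simpa using hb)), Finset.pairwise_sort _ _⟩
    · intro a ha b hb
      simp only [Finset.mem_sort] at ha
      rcases List.mem_cons.1 hb with rfl | hb
      · exact le_of_lt (hA a ha)
      · simp only [Finset.mem_sort] at hb
        exact le_of_lt (lt_trans (hA a ha) (hB b hb))

lemma sort_nodes {t : BT} (h : isBST t) : (nodes t).sort (· ≤ ·) = inorder t := by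
  induction t with
  | leaf => simp
  | node l v r ihl ihr =>
    rw [nodes_node, sort_split h.1 h.2.1, ihl h.2.2.1, ihr h.2.2.2, inorder]

lemma inorder_sorted_lt {t : BT} (h : isBST t) : (inorder t).Pairwise (· < ·) := by
  rw [← sort_nodes h]
  exact (Finset.sortedLT_sort _).pairwise

lemma inorder_nodup {t : BT} (h : isBST t) : (inorder t).Nodup :=
  (inorder_sorted_lt h).nodup

lemma mem_inorder {t : BT} (h : isBST t) {z : ℝ} : z ∈ inorder t ↔ z ∈ nodes t := by
  rw [← sort_nodes h, Finset.mem_sort]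

lemma length_inorder (t : BT) : (inorder t).length = size t := by
  induction t with
  | leaf => simp
  | node l v r ihl ihr => simp [inorder, size, ihl, ihr]; omega

end BT
namespace BT

lemma ne_leaf_of_mem {t : BT} {z : ℝ} (hz : z ∈ nodes t) : t ≠ .leaf := by
  rintro rfl; simp at hz

lemma split_lt {l : BT} {v p : ℝ} {r : BT} (h : p < v) :
    split (.node l v r) p = ((split l p).1, .node (split l p).2 v r) := by
  rw [split, if_pos h]

lemma split_gt {l : BT} {v p : ℝ} {r : BT} (h : v < p) :
    split (.node l v r) p = (.node l v (split r p).1, (split r p).2) := by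
  rw [split, if_neg (asymm h), if_pos h]

lemma split_self (l : BT) (v : ℝ) (r : BT) : split (.node l v r) v = (l, r) := by
  rw [split]; simp

lemma split_spec {t : BT} (h : isBST t) (p : ℝ) :
    isBST (split t p).1 ∧ isBST (split t p).2 ∧
    nodes (split t p).1 = (nodes t).filter (· < p) ∧
    nodes (split t p).2 = (nodes t).filter (p < ·) ∧
    height (split t p).1 ≤ height t ∧ height (split t p).2 ≤ height t := by
  induction t with
  | leaf => simp [split]
  | node l v r ihl ihr =>
    obtain ⟨hbl, hbr, hl, hr⟩ := h
    rcases lt_trichotomy p v with hlt | rfl | hgt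
    · obtain ⟨i1, i2, i3, i4, i5, i6⟩ := ihl hl
      rw [split_lt hlt]
      have hn2 : nodes (BT.node (split l p).2 v r) =
          (nodes (BT.node l v r)).filter (p < ·) := by
        ext z
        simp only [nodes_node, Finset.mem_insert, Finset.mem_union, Finset.mem_filter, i4]
        constructor
        · rintro (rfl | hz | hz)
          · exact ⟨Or.inl rfl, hlt⟩
          · exact ⟨Or.inr (Or.inl hz.1), hz.2⟩
          · exact ⟨Or.inr (Or.inr hz), lt_trans hlt (hbr z hz)⟩
        · rintro ⟨rfl | hz | hz, hp⟩
          · exact Or.inl rfl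
          · exact Or.inr (Or.inl ⟨hz, hp⟩)
          · exact Or.inr (Or.inr hz)
      have hb2 : isBST (BT.node (split l p).2 v r) := by
        refine ⟨?_, hbr, i2, hr⟩
        intro z hz
        rw [i4, Finset.mem_filter] at hz
        exact hbl z hz.1
      refine ⟨i1, hb2, ?_, hn2, ?_, ?_⟩
      · rw [i3]
        ext z
        simp only [nodes_node, Finset.mem_insert, Finset.mem_union, Finset.mem_filter]
        constructor
        · rintro ⟨hz, hp⟩; exact ⟨Or.inr (Or.inl hz), hp⟩
        · rintro ⟨rfl | hz | hz, hp⟩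
          · exact absurd hp (asymm hlt)
          · exact ⟨hz, hp⟩
          · exact absurd (lt_trans hp (lt_trans hlt (hbr z hz))) (lt_irrefl z)
        -- note: third case: z ∈ r, z < p < v but v < z contradiction
      · calc height (split l p).1 ≤ height l := i5
          _ ≤ height (BT.node l v r) := by
            by_cases hleaf : l = .leaf
            · subst hleaf; simp
            · exact le_trans (Nat.le_succ _) (height_left_lt ⟨hbl, hbr, hl, hr⟩ hleaf)
      · apply height_le
        intro z hz
        rw [hn2, Finset.mem_filter] at hz
        obtain ⟨hz, hp⟩ := hz
        simp only [nodes_node, Finset.mem_insert, Finset.mem_union] at hz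
        rcases hz with rfl | hz | hz
        · rw [sig_node_self]; simp
        · have hzl : z < v := hbl z hz
          have hzs : z ∈ nodes (split l p).2 := by rw [i4, Finset.mem_filter]; exact ⟨hz, hp⟩
          rw [sig_node_lt hzl]
          have : (sig (split l p).2 z).length ≤ height l :=
            le_trans (sig_length_le_height hzs) i6
          have h2 : height l + 1 ≤ height (BT.node l v r) :=
            height_left_lt ⟨hbl, hbr, hl, hr⟩ (ne_leaf_of_mem hz)
          simp only [List.length_cons]
          omega
        · have hzr : v < z := hbr z hz
          rw [sig_node_gt hzr]
          have : (sig r z).length ≤ height r := sig_length_le_height hz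
          have h2 : height r + 1 ≤ height (BT.node l v r) :=
            height_right_lt ⟨hbl, hbr, hl, hr⟩ (ne_leaf_of_mem hz)
          simp only [List.length_cons]
          omega
    · rw [split_self]
      refine ⟨hl, hr, ?_, ?_, ?_, ?_⟩
      · ext z
        simp only [nodes_node, Finset.mem_insert, Finset.mem_union, Finset.mem_filter]
        constructor
        · intro hz; exact ⟨Or.inr (Or.inl hz), hbl z hz⟩
        · rintro ⟨rfl | hz | hz, hp⟩
          · exact absurd hp (lt_irrefl z)
          · exact hz
          · exact absurd (lt_trans hp (hbr z hz)) (lt_irrefl z)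
      · ext z
        simp only [nodes_node, Finset.mem_insert, Finset.mem_union, Finset.mem_filter]
        constructor
        · intro hz; exact ⟨Or.inr (Or.inr hz), hbr z hz⟩
        · rintro ⟨rfl | hz | hz, hp⟩
          · exact absurd hp (lt_irrefl z)
          · exact absurd (lt_trans hp (hbl z hz)) (lt_irrefl p)
          · exact hz
      · by_cases hleaf : l = .leaf
        · subst hleaf; simp
        · exact le_trans (Nat.le_succ _) (height_left_lt ⟨hbl, hbr, hl, hr⟩ hleaf)
      · by_cases hleaf : r = .leaf
        · subst hleaf; simp
        · exact le_trans (Nat.le_succ _) (height_right_lt ⟨hbl, hbr, hl, hr⟩ hleaf)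
    · obtain ⟨i1, i2, i3, i4, i5, i6⟩ := ihr hr
      rw [split_gt hgt]
      have hn1 : nodes (BT.node l v (split r p).1) =
          (nodes (BT.node l v r)).filter (· < p) := by
        ext z
        simp only [nodes_node, Finset.mem_insert, Finset.mem_union, Finset.mem_filter, i3]
        constructor
        · rintro (rfl | hz | hz)
          · exact ⟨Or.inl rfl, hgt⟩
          · exact ⟨Or.inr (Or.inl hz), lt_trans (hbl z hz) hgt⟩
          · exact ⟨Or.inr (Or.inr hz.1), hz.2⟩
        · rintro ⟨rfl | hz | hz, hp⟩
          · exact Or.inl rfl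
          · exact Or.inr (Or.inl hz)
          · exact Or.inr (Or.inr ⟨hz, hp⟩)
      have hb1 : isBST (BT.node l v (split r p).1) := by
        refine ⟨hbl, ?_, hl, i1⟩
        intro z hz
        rw [i3, Finset.mem_filter] at hz
        exact hbr z hz.1
      refine ⟨hb1, i2, hn1, ?_, ?_, ?_⟩
      · rw [i4]
        ext z
        simp only [nodes_node, Finset.mem_insert, Finset.mem_union, Finset.mem_filter]
        constructor
        · rintro ⟨hz, hp⟩; exact ⟨Or.inr (Or.inr hz), hp⟩
        · rintro ⟨rfl | hz | hz, hp⟩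
          · exact absurd hp (asymm hgt)
          · exact absurd (lt_trans hp (lt_trans (hbl z hz) hgt)) (lt_irrefl p)
          · exact ⟨hz, hp⟩
      · apply height_le
        intro z hz
        rw [hn1, Finset.mem_filter] at hz
        obtain ⟨hz, hp⟩ := hz
        simp only [nodes_node, Finset.mem_insert, Finset.mem_union] at hz
        rcases hz with rfl | hz | hz
        · rw [sig_node_self]; simp
        · have hzl : z < v := hbl z hz
          rw [sig_node_lt hzl]
          have : (sig l z).length ≤ height l := sig_length_le_height hz
          have h2 : height l + 1 ≤ height (BT.node l v r) :=
            height_left_lt ⟨hbl, hbr, hl, hr⟩ (ne_leaf_of_mem hz)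
          simp only [List.length_cons]
          omega
        · have hzr : v < z := hbr z hz
          have hzs : z ∈ nodes (split r p).1 := by rw [i3, Finset.mem_filter]; exact ⟨hz, hp⟩
          rw [sig_node_gt hzr]
          have : (sig (split r p).1 z).length ≤ height r :=
            le_trans (sig_length_le_height hzs) i5
          have h2 : height r + 1 ≤ height (BT.node l v r) :=
            height_right_lt ⟨hbl, hbr, hl, hr⟩ (ne_leaf_of_mem hz)
          simp only [List.length_cons]
          omega
      · calc height (split r p).2 ≤ height r := i6
          _ ≤ height (BT.node l v r) := by
            by_cases hleaf : r = .leaf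
            · subst hleaf; simp
            · exact le_trans (Nat.le_succ _) (height_right_lt ⟨hbl, hbr, hl, hr⟩ hleaf)

end BT
namespace BT

/-- optional lower bound -/
def olb : Option ℝ → ℝ → Prop := fun o z => ∀ a ∈ o, a < z
/-- optional upper bound -/
def oub : ℝ → Option ℝ → Prop := fun z o => ∀ b ∈ o, z < b

@[simp] lemma olb_none (z : ℝ) : olb none z := by simp [olb]
@[simp] lemma oub_none (z : ℝ) : oub z none := by simp [oub]
@[simp] lemma olb_some {a z : ℝ} : olb (some a) z ↔ a < z := by simp [olb]
@[simp] lemma oub_some {b z : ℝ} : oub z (some b) ↔ z < b := by simp [oub]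

/-- `Fits N Q lo hi ws ts`: the trees in `ts` carry exactly the elements of `N`
in the successive gaps determined by the increasing list `ws` inside `(lo, hi)`,
and each tree satisfies `Q`. -/
inductive Fits (N : Finset ℝ) (Q : BT → Prop) : Option ℝ → Option ℝ → List ℝ → List BT → Prop
  | nil {lo hi : Option ℝ} {P : BT} (hQ : Q P)
      (hnodes : nodes P = N.filter fun z => olb lo z ∧ oub z hi) :
      Fits N Q lo hi [] [P]
  | cons {lo hi : Option ℝ} {w : ℝ} {ws : List ℝ} {P : BT} {ts : List BT} (hQ : Q P)
      (hnodes : nodes P = N.filter fun z => olb lo z ∧ z < w)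
      (hlo : olb lo w) (hhi : oub w hi) (hlt : ∀ w' ∈ ws, w < w')
      (h : Fits N Q (some w) hi ws ts) :
      Fits N Q lo hi (w :: ws) (P :: ts)

namespace Fits

variable {N : Finset ℝ} {Q : BT → Prop}

lemma length : ∀ {lo hi ws ts}, Fits N Q lo hi ws ts → ts.length = ws.length + 1 := by
  intro lo hi ws ts h
  induction h with
  | nil _ _ => simp
  | cons _ _ _ _ _ _ ih => simp [ih]

lemma mono {Q' : BT → Prop} (hQQ : ∀ P, Q P → Q' P) :
    ∀ {lo hi ws ts}, Fits N Q lo hi ws ts → Fits N Q' lo hi ws ts := by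
  intro lo hi ws ts h
  induction h with
  | nil hQ hn => exact nil (hQQ _ hQ) hn
  | cons hQ hn hlo hhi hlt _ ih => exact cons (hQQ _ hQ) hn hlo hhi hlt ih

lemma append : ∀ {ws₁ : List ℝ} {lo hi w ts₁ ws₂ ts₂},
    Fits N Q lo (some w) ws₁ ts₁ → Fits N Q (some w) hi ws₂ ts₂ →
    olb lo w → oub w hi → (∀ b ∈ ws₂, w < b) →
    Fits N Q lo hi (ws₁ ++ w :: ws₂) (ts₁ ++ ts₂) := by
  intro ws₁
  induction ws₁ with
  | nil =>
    intro lo hi w ts₁ ws₂ ts₂ h1 h2 holo hohi hws₂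
    cases h1 with
    | nil hQ hn =>
      simp only [List.nil_append, List.singleton_append]
      exact cons hQ (by simpa using hn) holo hohi hws₂ h2
  | cons w₁ ws₁' ih =>
    intro lo hi w ts₁ ws₂ ts₂ h1 h2 holo hohi hws₂
    cases h1 with
    | cons hQ hn hlo hhi hlt h =>
      have hw₁w : w₁ < w := by simpa using hhi
      simp only [List.cons_append]
      refine cons hQ hn hlo ?_ ?_ (ih h h2 (by simpa using hw₁w) hohi hws₂)
      · intro b hb
        exact lt_trans hw₁w (hohi b hb)
      · intro w' hw'
        rcases List.mem_append.1 hw' with hw' | hw'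
        · exact hlt w' hw'
        · rcases List.mem_cons.1 hw' with rfl | hw'
          · exact hw₁w
          · exact lt_trans hw₁w (hws₂ w' hw')

lemma mem_piece : ∀ {lo hi ws ts}, Fits N Q lo hi ws ts → ∀ {P}, P ∈ ts →
    ∃ a b : Option ℝ, Q P ∧ nodes P = (N.filter fun z => olb a z ∧ oub z b) ∧
      (∀ z, olb a z → olb lo z) ∧ (∀ z, oub z b → oub z hi) ∧
      (∀ w ∈ ws, ¬(olb a w ∧ oub w b)) := by
  intro lo hi ws ts h
  induction h with
  | @nil lo hi P hQ hn =>
    intro P' hP'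
    rcases List.mem_singleton.1 hP' with rfl
    exact ⟨lo, hi, hQ, hn, fun _ hz => hz, fun _ hz => hz, by simp⟩
  | @cons lo hi w ws P ts hQ hn hlo hhi hlt h ih =>
    intro P' hP'
    rcases List.mem_cons.1 hP' with rfl | hP'
    · refine ⟨lo, some w, hQ, by simpa using hn, fun _ hz => hz, ?_, ?_⟩
      · intro z hz b hb
        exact lt_trans (by simpa using hz) (hhi b hb)
      · intro w' hw' ⟨_, hc⟩
        rcases List.mem_cons.1 hw' with rfl | hw'
        · exact absurd (by simpa using hc) (lt_irrefl w')
        · exact absurd (by simpa using hc) (asymm (hlt w' hw'))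
    · obtain ⟨a, b, hQ', hn', ha, hb, hws⟩ := ih hP'
      refine ⟨a, b, hQ', hn', ?_, hb, ?_⟩
      · intro z hz
        have : w < z := by simpa using ha z hz
        intro a' ha'
        exact lt_trans (hlo a' ha') this
      · intro w' hw'
        rcases List.mem_cons.1 hw' with rfl | hw'
        · intro ⟨hc, _⟩
          exact absurd (by simpa using ha w' hc) (lt_irrefl w')
        · exact hws w' hw'

lemma split_at : ∀ {ws₁ : List ℝ} {lo hi w ws₂ ts},
    Fits N Q lo hi (ws₁ ++ w :: ws₂) ts →
    Fits N Q lo (some w) ws₁ (ts.take (ws₁.length + 1)) ∧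
    Fits N Q (some w) hi ws₂ (ts.drop (ws₁.length + 1)) := by
  intro ws₁
  induction ws₁ with
  | nil =>
    intro lo hi w ws₂ ts h
    cases h with
    | cons hQ hn hlo hhi hlt h =>
      constructor
      · simpa using nil (lo := lo) (hi := some w) hQ (by simpa using hn)
      · simpa using h
  | cons w₁ ws₁' ih =>
    intro lo hi w ws₂ ts h
    cases h with
    | cons hQ hn hlo hhi hlt h =>
      obtain ⟨h1, h2⟩ := ih h
      constructor
      · simp only [List.length_cons, List.take_succ_cons]
        refine cons hQ hn hlo ?_ ?_ h1
        · simp only [oub_some]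
          exact hlt w (by simp)
        · intro w' hw'
          exact hlt w' (List.mem_append.2 (Or.inl hw'))
      · simpa using h2
  
end Fits

end BT
namespace BT

lemma ms_fits (N : Finset ℝ) (Q : BT → Prop) :
    ∀ (n : ℕ) (xs : List ℝ) (t : BT) (lo hi : Option ℝ), xs.length ≤ n → isBST t →
    xs.Pairwise (· < ·) → (∀ z ∈ nodes t, olb lo z ∧ oub z hi) → (∀ a ∈ xs, a ∈ nodes t) →
    ((nodes t).filter (fun z => z ∉ xs) = N.filter fun z => olb lo z ∧ oub z hi) →
    (∀ u : BT, isBST u → height u ≤ height t → nodes u ⊆ nodes t → Q u) →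
    Fits N Q lo hi xs (multiSplit t xs) := by
  intro n
  induction n with
  | zero =>
    intro xs t lo hi hlen hbst hsort hbnd hmem hfilt hQ
    have hxse : xs = [] := List.length_eq_zero_iff.1 (Nat.le_zero.1 hlen)
    subst hxse
    rw [multiSplit]
    refine Fits.nil (hQ t hbst le_rfl subset_rfl) ?_
    simpa using hfilt
  | succ n ih =>
    intro xs t lo hi hlen hbst hsort hbnd hmem hfilt hQ
    cases xs with
    | nil =>
      rw [multiSplit]
      refine Fits.nil (hQ t hbst le_rfl subset_rfl) ?_
      simpa using hfilt
    | cons x₀ xs' =>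
      set xs := x₀ :: xs' with hxs
      have hlenpos : 0 < xs.length := by simp [hxs]
      set m : ℕ := (xs.length + 1) / 2 with hm
      have hm1 : 1 ≤ m := by
        rw [hm]; omega
      have hmlen : m ≤ xs.length := by
        rw [hm]; simp [hxs]; omega
      have hilen : m - 1 < xs.length := by omega
      set p : ℝ := xs.getD (m - 1) 0 with hp
      have hpe : p = xs[m - 1] := by
        rw [hp, List.getD_eq_getElem?_getD, List.getElem?_eq_getElem hilen]
        rfl
      set L : List ℝ := xs.take (m - 1) with hL
      set R : List ℝ := xs.drop m with hR
      have hLlen : L.length = m - 1 := by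
        rw [hL, List.length_take]; omega
      have hRlen : R.length = xs.length - m := by
        rw [hR, List.length_drop]
      have hmm1 : m - 1 + 1 = m := by omega
      have hd : List.drop (m - 1) xs = xs[m - 1] :: List.drop m xs := by
        rw [← List.getElem_cons_drop hilen, hmm1]
      have hsplit : xs = L ++ p :: R := by
        rw [hL, hR, hpe, ← hd, List.take_append_drop]
      have hpw : List.Pairwise (· < ·) (L ++ p :: R) := by
        rw [← hsplit]; exact hsort
      rw [List.pairwise_append] at hpw
      obtain ⟨hsortL, hsortPR, hcross⟩ := hpw
      rw [List.pairwise_cons] at hsortPR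
      obtain ⟨hpR, hsortR⟩ := hsortPR
      have hLp : ∀ a ∈ L, a < p := fun a ha => hcross a ha p (by simp)
      have hpmem : p ∈ nodes t := hmem p (by rw [hsplit]; simp)
      obtain ⟨hbp, hpb⟩ := hbnd p hpmem
      obtain ⟨hb1, hb2, hn1, hn2, hh1, hh2⟩ := split_spec hbst p
      have h1 : Fits N Q lo (some p) L (multiSplit (split t p).1 L) := by
        apply ih
        · omega
        · exact hb1
        · exact hsortL
        · intro z hz
          rw [hn1, Finset.mem_filter] at hz
          exact ⟨(hbnd z hz.1).1, by simpa using hz.2⟩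
        · intro a ha
          rw [hn1, Finset.mem_filter]
          exact ⟨hmem a (by rw [hsplit]; simp [ha]), hLp a ha⟩
        · ext z
          simp only [Finset.mem_filter, hn1]
          constructor
          · rintro ⟨⟨hzt, hzp⟩, hzL⟩
            have hznx : z ∉ xs := by
              rw [hsplit]
              simp only [List.mem_append, List.mem_cons]
              rintro (hc | rfl | hc)
              · exact hzL hc
              · exact absurd hzp (lt_irrefl _)
              · exact absurd (lt_trans hzp (hpR z hc)) (lt_irrefl z)
            have := Finset.mem_filter.1 (hfilt ▸ Finset.mem_filter.2 ⟨hzt, hznx⟩)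
            exact ⟨this.1, this.2.1, by simpa using hzp⟩
          · rintro ⟨hzN, hzlo, hzp⟩
            have hzp' : z < p := by simpa using hzp
            have : z ∈ (nodes t).filter (fun z => z ∉ xs) := by
              rw [hfilt, Finset.mem_filter]
              exact ⟨hzN, hzlo, fun b hb => lt_trans hzp' (hpb b hb)⟩
            rw [Finset.mem_filter] at this
            refine ⟨⟨this.1, hzp'⟩, fun hc => this.2 ?_⟩
            rw [hsplit]
            simp [hc]
        · intro u hu hh hsub
          exact hQ u hu (le_trans hh hh1)
            (hsub.trans (by rw [hn1]; exact Finset.filter_subset _ _))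
      have h2 : Fits N Q (some p) hi R (multiSplit (split t p).2 R) := by
        apply ih
        · omega
        · exact hb2
        · exact hsortR
        · intro z hz
          rw [hn2, Finset.mem_filter] at hz
          exact ⟨by simpa using hz.2, (hbnd z hz.1).2⟩
        · intro a ha
          rw [hn2, Finset.mem_filter]
          exact ⟨hmem a (by rw [hsplit]; simp [ha]), hpR a ha⟩
        · ext z
          simp only [Finset.mem_filter, hn2]
          constructor
          · rintro ⟨⟨hzt, hzp⟩, hzR⟩
            have hznx : z ∉ xs := by
              rw [hsplit]
              simp only [List.mem_append, List.mem_cons]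
              rintro (hc | rfl | hc)
              · exact absurd (lt_trans hzp (hLp z hc)) (lt_irrefl p)
              · exact absurd hzp (lt_irrefl _)
              · exact hzR hc
            have := Finset.mem_filter.1 (hfilt ▸ Finset.mem_filter.2 ⟨hzt, hznx⟩)
            exact ⟨this.1, by simpa using hzp, this.2.2⟩
          · rintro ⟨hzN, hzp, hzhi⟩
            have hzp' : p < z := by simpa using hzp
            have : z ∈ (nodes t).filter (fun z => z ∉ xs) := by
              rw [hfilt, Finset.mem_filter]
              exact ⟨hzN, fun b hb => lt_trans (hbp b hb) hzp', hzhi⟩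
            rw [Finset.mem_filter] at this
            refine ⟨⟨this.1, hzp'⟩, fun hc => this.2 ?_⟩
            rw [hsplit]
            simp [hc]
        · intro u hu hh hsub
          exact hQ u hu (le_trans hh hh2)
            (hsub.trans (by rw [hn2]; exact Finset.filter_subset _ _))
      have heq : multiSplit t xs =
          multiSplit (split t p).1 L ++ multiSplit (split t p).2 R := by
        rw [hxs, multiSplit]
      rw [heq, hsplit]
      exact Fits.append h1 h2 hbp hpb hpR

end BT
namespace BT

@[simp] lemma shallow_zero (t : BT) : shallowNodes t 0 = ∅ := by
  simp [shallowNodes]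

@[simp] lemma shallow_leaf (k : ℕ) : shallowNodes .leaf k = ∅ := by
  simp [shallowNodes]

lemma shallow_subset (t : BT) (k : ℕ) : shallowNodes t k ⊆ nodes t :=
  Finset.filter_subset _ _

lemma shallow_node {l : BT} {v : ℝ} {r : BT} (h : isBST (.node l v r)) (k : ℕ) :
    shallowNodes (.node l v r) (k + 1) =
      insert v (shallowNodes l k ∪ shallowNodes r k) := by
  ext z
  simp only [shallowNodes, Finset.mem_filter, Finset.mem_insert, Finset.mem_union,
    nodes_node]
  constructor
  · rintro ⟨rfl | hz | hz, hd⟩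
    · exact Or.inl rfl
    · rw [sig_node_lt (h.1 z hz)] at hd
      simp only [List.length_cons] at hd
      exact Or.inr (Or.inl ⟨hz, by omega⟩)
    · rw [sig_node_gt (h.2.1 z hz)] at hd
      simp only [List.length_cons] at hd
      exact Or.inr (Or.inr ⟨hz, by omega⟩)
  · rintro (rfl | ⟨hz, hd⟩ | ⟨hz, hd⟩)
    · refine ⟨Or.inl rfl, ?_⟩
      rw [sig_node_self]
      simp
    · refine ⟨Or.inr (Or.inl hz), ?_⟩
      rw [sig_node_lt (h.1 z hz)]
      simp only [List.length_cons]
      omega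
    · refine ⟨Or.inr (Or.inr hz), ?_⟩
      rw [sig_node_gt (h.2.1 z hz)]
      simp only [List.length_cons]
      omega

lemma card_shallow_lt : ∀ (k : ℕ) (t : BT), isBST t → (shallowNodes t k).card < 2 ^ k := by
  intro k
  induction k with
  | zero => intro t _; simp
  | succ k ih =>
    intro t ht
    cases t with
    | leaf => simp
    | node l v r =>
      rw [shallow_node ht k]
      calc (insert v (shallowNodes l k ∪ shallowNodes r k)).card
          ≤ (shallowNodes l k ∪ shallowNodes r k).card + 1 := Finset.card_insert_le _ _
        _ ≤ (shallowNodes l k).card + (shallowNodes r k).card + 1 := by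
            have := Finset.card_union_le (shallowNodes l k) (shallowNodes r k)
            omega
        _ < 2 ^ (k + 1) := by
            have h1 := ih l ht.2.2.1
            have h2 := ih r ht.2.2.2
            rw [pow_succ]
            omega

/-- The property carried by the trees produced by the `MultiSplit`s in `Balance`. -/
def QBal (K C : ℕ) : BT → Prop := fun P =>
  isBST P ∧ ∀ z ∈ nodes P, (sig P z).length + K ≤ C

lemma sort_filter_inorder {t : BT} (h : isBST t) (XL : List ℝ) :
    ((nodes t).filter (fun z => z ∈ XL)).sort (· ≤ ·) =
      (inorder t).filter (fun z => decide (z ∈ XL)) := by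
  refine (fun hp h1 h2 => List.Perm.eq_of_pairwise' (r := (· ≤ ·)) h1 h2 hp) ?_ (Finset.pairwise_sort _ _)
    (List.Pairwise.filter _ ((inorder_sorted_lt h).imp le_of_lt))
  apply (List.perm_ext_iff_of_nodup (Finset.sort_nodup _ _)
    (List.Nodup.filter _ (inorder_nodup h))).2
  intro z
  simp [Finset.mem_sort, mem_inorder h]

lemma slf (N : Finset ℝ) (XL : List ℝ) (K C : ℕ) :
    ∀ (k j : ℕ) (t : BT) (lo hi : Option ℝ), isBST t → K ≤ j + k →
    (∀ z ∈ nodes t, olb lo z ∧ oub z hi) →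
    ((nodes t).filter (fun z => z ∉ XL ∧ z ∉ shallowNodes t k) =
      N.filter fun z => olb lo z ∧ oub z hi) →
    (∀ z ∈ nodes t, (sig t z).length + j ≤ C) →
    Fits N (QBal K C) lo hi
      ((shallowNodes t k ∪ (nodes t).filter (fun z => z ∈ XL)).sort (· ≤ ·))
      ((slots k t).flatMap fun ti =>
        multiSplit ti ((inorder ti).filter fun z => z ∈ XL)) := by
  intro k
  induction k with
  | zero =>
    intro j t lo hi hbst hjk hbnd hfilt hdep
    rw [shallow_zero, Finset.empty_union]
    have hslots : slots 0 t = [t] := rfl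
    rw [hslots]
    simp only [List.flatMap_cons, List.flatMap_nil, List.append_nil]
    rw [sort_filter_inorder hbst XL]
    apply ms_fits
    · exact le_rfl
    · exact hbst
    · exact List.Pairwise.filter _ (inorder_sorted_lt hbst)
    · exact hbnd
    · intro a ha
      rw [← mem_inorder hbst]
      exact (List.mem_filter.1 ha).1
    · rw [← hfilt]
      ext z
      simp only [Finset.mem_filter, List.mem_filter, decide_eq_true_eq, mem_inorder hbst,
        Finset.notMem_empty, shallow_zero, not_false_iff, and_true]
      tauto
    · intro u hu hh hsub
      refine ⟨hu, ?_⟩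
      intro z hz
      have hzt : z ∈ nodes t := hsub hz
      obtain ⟨zs, hzs, hsup⟩ := Finset.exists_mem_eq_sup (nodes t) ⟨z, hzt⟩
        (fun w => (sig t w).length)
      have h1 : (sig u z).length ≤ height t := le_trans (sig_length_le_height hz) hh
      have h2 := hdep zs hzs
      have h3 : height t = (sig t zs).length := hsup
      omega
  | succ k ih =>
    intro j t lo hi hbst hjk hbnd hfilt hdep
    cases t with
    | leaf =>
      have hslots : slots (k+1) BT.leaf = [.leaf] := rfl
      rw [hslots]
      have : inorder BT.leaf = [] := rfl
      simp only [this, List.filter_nil, List.flatMap_cons, List.flatMap_nil, List.append_nil]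
      rw [multiSplit]
      have hW : (shallowNodes BT.leaf (k+1) ∪ (nodes BT.leaf).filter (fun z => z ∈ XL)) = ∅ := by
        simp
      rw [hW]
      rw [Finset.sort_empty]
      refine Fits.nil ⟨trivial, by simp⟩ ?_
      rw [← hfilt]
      simp
    | node l v r =>
      obtain ⟨hbl, hbr, hl, hr⟩ := hbst
      obtain ⟨hvlo, hvhi⟩ := hbnd v (by simp)
      have hWset : shallowNodes (BT.node l v r) (k+1) ∪
          (nodes (BT.node l v r)).filter (fun z => z ∈ XL) =
          insert v ((shallowNodes l k ∪ (nodes l).filter (fun z => z ∈ XL)) ∪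
            (shallowNodes r k ∪ (nodes r).filter (fun z => z ∈ XL))) := by
        rw [shallow_node ⟨hbl, hbr, hl, hr⟩ k]
        ext z
        simp only [Finset.mem_union, Finset.mem_insert, Finset.mem_filter, nodes_node]
        tauto
      have hA : ∀ a ∈ shallowNodes l k ∪ (nodes l).filter (fun z => z ∈ XL), a < v := by
        intro a ha
        rcases Finset.mem_union.1 ha with ha | ha
        · exact hbl a (shallow_subset l k ha)
        · exact hbl a (Finset.mem_filter.1 ha).1
      have hB : ∀ b ∈ shallowNodes r k ∪ (nodes r).filter (fun z => z ∈ XL), v < b := by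
        intro b hb
        rcases Finset.mem_union.1 hb with hb | hb
        · exact hbr b (shallow_subset r k hb)
        · exact hbr b (Finset.mem_filter.1 hb).1
      rw [hWset, sort_split hA hB]
      have hslots : slots (k+1) (BT.node l v r) = slots k l ++ slots k r := rfl
      rw [hslots, List.flatMap_append]
      have hmeml : ∀ z, z ∈ nodes l ↔ (z ∈ nodes (BT.node l v r) ∧ z < v) := by
        intro z
        constructor
        · intro hz; exact ⟨by simp [hz], hbl z hz⟩
        · rintro ⟨hz, hzv⟩; exact mem_left_of_lt ⟨hbl, hbr, hl, hr⟩ hz hzv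
      have hmemr : ∀ z, z ∈ nodes r ↔ (z ∈ nodes (BT.node l v r) ∧ v < z) := by
        intro z
        constructor
        · intro hz; exact ⟨by simp [hz], hbr z hz⟩
        · rintro ⟨hz, hzv⟩; exact mem_right_of_gt ⟨hbl, hbr, hl, hr⟩ hz hzv
      have hshl : ∀ z ∈ nodes l, (z ∈ shallowNodes (BT.node l v r) (k+1) ↔ z ∈ shallowNodes l k) := by
        intro z hz
        rw [shallow_node ⟨hbl, hbr, hl, hr⟩ k]
        simp only [Finset.mem_insert, Finset.mem_union]
        constructor
        · rintro (rfl | hc | hc)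
          · exact absurd (hbl z hz) (lt_irrefl z)
          · exact hc
          · exact absurd (hbr z (shallow_subset r k hc)) (asymm (hbl z hz))
        · intro hc
          exact Or.inr (Or.inl hc)
      have hshr : ∀ z ∈ nodes r, (z ∈ shallowNodes (BT.node l v r) (k+1) ↔ z ∈ shallowNodes r k) := by
        intro z hz
        rw [shallow_node ⟨hbl, hbr, hl, hr⟩ k]
        simp only [Finset.mem_insert, Finset.mem_union]
        constructor
        · rintro (rfl | hc | hc)
          · exact absurd (hbr z hz) (lt_irrefl z)
          · exact absurd (hbl z (shallow_subset l k hc)) (asymm (hbr z hz))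
          · exact hc
        · intro hc
          exact Or.inr (Or.inr hc)
      have h1 := ih (j+1) l lo (some v) hl (by omega) ?_ ?_ ?_
      rotate_left
      · intro z hz
        exact ⟨(hbnd z (by simp [hz])).1, by simpa using hbl z hz⟩
      · ext z
        simp only [Finset.mem_filter]
        constructor
        · rintro ⟨hz, hnx, hns⟩
          have hzt : z ∈ nodes (BT.node l v r) := by simp [hz]
          have : z ∈ N.filter fun z => olb lo z ∧ oub z hi := by
            rw [← hfilt, Finset.mem_filter]
            exact ⟨hzt, hnx, fun hc => hns ((hshl z hz).1 hc)⟩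
          rw [Finset.mem_filter] at this
          exact ⟨this.1, this.2.1, by simpa using hbl z hz⟩
        · rintro ⟨hz, hzlo, hzv⟩
          have hzv' : z < v := by simpa using hzv
          have : z ∈ (nodes (BT.node l v r)).filter
              (fun z => z ∉ XL ∧ z ∉ shallowNodes (BT.node l v r) (k+1)) := by
            rw [hfilt, Finset.mem_filter]
            exact ⟨hz, hzlo, fun b hb => lt_trans hzv' (hvhi b hb)⟩
          rw [Finset.mem_filter] at this
          obtain ⟨hzt, hnx, hns⟩ := this
          have hzl : z ∈ nodes l := (hmeml z).2 ⟨hzt, hzv'⟩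
          exact ⟨hzl, hnx, fun hc => hns ((hshl z hzl).2 hc)⟩
      · intro z hz
        have := hdep z (by simp [hz])
        rw [sig_node_lt (hbl z hz)] at this
        simp only [List.length_cons] at this
        omega
      have h2 := ih (j+1) r (some v) hi hr (by omega) ?_ ?_ ?_
      rotate_left
      · intro z hz
        exact ⟨by simpa using hbr z hz, (hbnd z (by simp [hz])).2⟩
      · ext z
        simp only [Finset.mem_filter]
        constructor
        · rintro ⟨hz, hnx, hns⟩
          have hzt : z ∈ nodes (BT.node l v r) := by simp [hz]
          have : z ∈ N.filter fun z => olb lo z ∧ oub z hi := by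
            rw [← hfilt, Finset.mem_filter]
            exact ⟨hzt, hnx, fun hc => hns ((hshr z hz).1 hc)⟩
          rw [Finset.mem_filter] at this
          exact ⟨this.1, by simpa using hbr z hz, this.2.2⟩
        · rintro ⟨hz, hzv, hzhi⟩
          have hzv' : v < z := by simpa using hzv
          have : z ∈ (nodes (BT.node l v r)).filter
              (fun z => z ∉ XL ∧ z ∉ shallowNodes (BT.node l v r) (k+1)) := by
            rw [hfilt, Finset.mem_filter]
            exact ⟨hz, fun a ha => lt_trans (hvlo a ha) hzv', hzhi⟩
          rw [Finset.mem_filter] at this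
          obtain ⟨hzt, hnx, hns⟩ := this
          have hzr : z ∈ nodes r := (hmemr z).2 ⟨hzt, hzv'⟩
          exact ⟨hzr, hnx, fun hc => hns ((hshr z hzr).2 hc)⟩
      · intro z hz
        have := hdep z (by simp [hz])
        rw [sig_node_gt (hbr z hz)] at this
        simp only [List.length_cons] at this
        omega
      apply Fits.append h1 h2 hvlo hvhi
      intro b hb
      rw [Finset.mem_sort] at hb
      exact hB b hb

end BT
namespace BT

lemma glue_snd : ∀ (t : BT) (ts : List BT), (glue t ts).2 = ts.drop (size t + 1) := by
  intro t
  induction t with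
  | leaf => intro ts; simp [glue]
  | node l v r ihl ihr =>
    intro ts
    rw [glue]
    simp only
    rw [ihr, ihl, List.drop_drop]
    congr 1
    simp [size]
    omega

lemma headD_take {α : Type*} (ts : List α) (d : α) {n : ℕ} (hn : 1 ≤ n) :
    (ts.take n).headD d = ts.headD d := by
  cases ts with
  | nil => simp
  | cons a ts' =>
    cases n with
    | zero => omega
    | succ n => simp

lemma glue_take : ∀ (t : BT) (ts : List BT) (n : ℕ), size t + 1 ≤ n →
    (glue t (ts.take n)).1 = (glue t ts).1 := by
  intro t
  induction t with
  | leaf =>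
    intro ts n hn
    simp only [glue]
    rw [headD_take]
    simpa [size] using hn
  | node l v r ihl ihr =>
    intro ts n hn
    simp only [size] at hn
    rw [glue, glue]
    simp only
    rw [glue_snd, glue_snd, ihl ts n (by omega), List.drop_take,
      ihr (ts.drop (size l + 1)) (n - (size l + 1)) (by omega)]

/-- the maximum depth of an external position -/
def extH : BT → ℕ
  | .leaf => 0
  | .node l _ r => max (extH l) (extH r) + 1

lemma extH_le_height {t : BT} (h : isBST t) : extH t ≤ height t + 1 := by
  induction t with
  | leaf => simp [extH]
  | node l v r ihl ihr =>
    rw [extH]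
    have hl : extH l ≤ height (BT.node l v r) := by
      by_cases hleaf : l = .leaf
      · subst hleaf; simp [extH]
      · exact le_trans (ihl h.2.2.1) (height_left_lt h hleaf)
    have hr : extH r ≤ height (BT.node l v r) := by
      by_cases hleaf : r = .leaf
      · subst hleaf; simp [extH]
      · exact le_trans (ihr h.2.2.2) (height_right_lt h hleaf)
    omega

lemma glue_main (N : Finset ℝ) (Q : BT → Prop) (hQb : ∀ P, Q P → isBST P) :
    ∀ (t0 : BT) (lo hi : Option ℝ) (ts : List BT), isBST t0 →
    (∀ z ∈ nodes t0, olb lo z ∧ oub z hi) →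
    (∀ z ∈ N, z ∉ nodes t0) →
    Fits N Q lo hi ((nodes t0).sort (· ≤ ·)) ts →
    isBST (glue t0 ts).1 ∧
    nodes (glue t0 ts).1 = nodes t0 ∪ N.filter (fun z => olb lo z ∧ oub z hi) ∧
    (∀ z ∈ nodes t0, sig (glue t0 ts).1 z = sig t0 z) ∧
    (∀ z ∈ N.filter (fun z => olb lo z ∧ oub z hi), ∃ P ∈ ts, Q P ∧ z ∈ nodes P ∧
       subtreeAt (glue t0 ts).1 z = subtreeAt P z ∧
       (sig (glue t0 ts).1 z).length ≤ extH t0 + (sig P z).length) := by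
  intro t0
  induction t0 with
  | leaf =>
    intro lo hi ts _ _ _ hfits
    rw [nodes_leaf, Finset.sort_empty] at hfits
    cases hfits with
    | nil hQ hn =>
      refine ⟨by simpa [glue] using hQb _ hQ, by simp [glue, hn], by simp, ?_⟩
      intro z hz
      exact ⟨_, by simp, hQ, by rw [hn]; exact hz, by simp [glue], by simp [glue, extH]⟩
  | node l v r ihl ihr =>
    intro lo hi ts hbst hbnd hdisj hfits
    obtain ⟨hbl, hbr, hl, hr⟩ := hbst
    have hsort : (nodes (BT.node l v r)).sort (· ≤ ·) =
        (nodes l).sort (· ≤ ·) ++ v :: (nodes r).sort (· ≤ ·) := by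
      rw [nodes_node, sort_split hbl hbr]
    rw [hsort] at hfits
    have hlen : ((nodes l).sort (· ≤ ·)).length = size l := by
      rw [Finset.length_sort, size_eq_card hl]
    obtain ⟨hfl, hfr⟩ := Fits.split_at hfits
    rw [hlen] at hfl hfr
    have hvbnd := hbnd v (by simp)
    have ihlr := ihl lo (some v) (ts.take (size l + 1)) hl ?_ ?_ hfl
    rotate_left
    · intro z hz
      exact ⟨(hbnd z (by simp [hz])).1, by simpa using hbl z hz⟩
    · intro z hz hc
      exact hdisj z hz (by simp [hc])
    have ihrr := ihr (some v) hi (ts.drop (size l + 1)) hr ?_ ?_ hfr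
    rotate_left
    · intro z hz
      exact ⟨by simpa using hbr z hz, (hbnd z (by simp [hz])).2⟩
    · intro z hz hc
      exact hdisj z hz (by simp [hc])
    obtain ⟨jl1, jl2, jl3, jl4⟩ := ihlr
    obtain ⟨jr1, jr2, jr3, jr4⟩ := ihrr
    have hg : (glue (BT.node l v r) ts).1 =
        .node (glue l ts).1 v (glue r (ts.drop (size l + 1))).1 := by
      rw [glue]
      simp only
      rw [glue_snd]
    have hgl : (glue l (ts.take (size l + 1))).1 = (glue l ts).1 :=
      glue_take l ts (size l + 1) le_rfl
    rw [hgl] at jl1 jl2 jl3 jl4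
    set gl := (glue l ts).1
    set gr := (glue r (ts.drop (size l + 1))).1
    have hgll : ∀ z ∈ nodes gl, z < v := by
      intro z hz
      rw [jl2] at hz
      rcases Finset.mem_union.1 hz with hz | hz
      · exact hbl z hz
      · simpa using (Finset.mem_filter.1 hz).2.2
    have hglr : ∀ z ∈ nodes gr, v < z := by
      intro z hz
      rw [jr2] at hz
      rcases Finset.mem_union.1 hz with hz | hz
      · exact hbr z hz
      · simpa using (Finset.mem_filter.1 hz).2.1
    rw [hg]
    have hnodes : nodes (BT.node gl v gr) =
        nodes (BT.node l v r) ∪ N.filter fun z => olb lo z ∧ oub z hi := by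
      ext z
      simp only [nodes_node, Finset.mem_insert, Finset.mem_union, jl2, jr2,
        Finset.mem_filter]
      constructor
      · rintro (rfl | (hz | hz) | (hz | hz))
        · exact Or.inl (Or.inl rfl)
        · exact Or.inl (Or.inr (Or.inl hz))
        · obtain ⟨hN, hollo, holv⟩ := hz
          exact Or.inr ⟨hN, hollo, fun b hb => lt_trans (by simpa using holv) (hvbnd.2 b hb)⟩
        · exact Or.inl (Or.inr (Or.inr hz))
        · obtain ⟨hN, hvz, hozhi⟩ := hz
          exact Or.inr ⟨hN, fun a ha => lt_trans (hvbnd.1 a ha) (by simpa using hvz), hozhi⟩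
      · rintro ((rfl | hz | hz) | ⟨hN, hlo, hhi⟩)
        · exact Or.inl rfl
        · exact Or.inr (Or.inl (Or.inl hz))
        · exact Or.inr (Or.inr (Or.inl hz))
        · rcases lt_trichotomy z v with hzv | hzv | hzv
          · exact Or.inr (Or.inl (Or.inr ⟨hN, hlo, by simpa using hzv⟩))
          · exact absurd (by rw [hzv]; simp : z ∈ nodes (BT.node l v r)) (hdisj z hN)
          · exact Or.inr (Or.inr (Or.inr ⟨hN, by simpa using hzv, hhi⟩))
    refine ⟨⟨hgll, hglr, jl1, jr1⟩, hnodes, ?_, ?_⟩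
    · intro z hz
      simp only [nodes_node, Finset.mem_insert, Finset.mem_union] at hz
      rcases hz with rfl | hz | hz
      · rw [sig_node_self, sig_node_self]
      · have hzv := hbl z hz
        rw [sig_node_lt hzv, sig_node_lt hzv, jl3 z hz]
      · have hzv := hbr z hz
        rw [sig_node_gt hzv, sig_node_gt hzv, jr3 z hz]
    · intro z hz
      rw [Finset.mem_filter] at hz
      obtain ⟨hN, hlo, hhi⟩ := hz
      rcases lt_trichotomy z v with hzv | hzv | hzv
      · obtain ⟨P, hPmem, hPQ, hPz, hPsub, hPsig⟩ := jl4 z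
          (Finset.mem_filter.2 ⟨hN, hlo, by simpa using hzv⟩)
        refine ⟨P, (List.take_sublist _ _).mem hPmem, hPQ, hPz, ?_, ?_⟩
        · rw [subtreeAt_lt hzv]
          exact hPsub
        · rw [sig_node_lt hzv]
          simp only [List.length_cons, extH]
          omega
      · exact absurd (by rw [hzv]; simp : z ∈ nodes (BT.node l v r)) (hdisj z hN)
      · obtain ⟨P, hPmem, hPQ, hPz, hPsub, hPsig⟩ := jr4 z
          (Finset.mem_filter.2 ⟨hN, by simpa using hzv, hhi⟩)
        refine ⟨P, (List.drop_sublist _ _).mem hPmem, hPQ, hPz, ?_, ?_⟩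
        · rw [subtreeAt_gt hzv]
          exact hPsub
        · rw [sig_node_gt hzv]
          simp only [List.length_cons, extH]
          omega

end BT
namespace BT

lemma nat_div_add_le (x y q : ℕ) : (x + y) / q ≤ x / q + y / q + 1 := by
  rcases Nat.eq_zero_or_pos q with rfl | hq
  · simp
  · have h1 := Nat.div_add_mod x q
    have h2 := Nat.div_add_mod y q
    have h3 : x % q < q := Nat.mod_lt _ hq
    have h4 : y % q < q := Nat.mod_lt _ hq
    have h6 : (x + y) / q < x / q + y / q + 2 := by
      apply Nat.div_lt_of_lt_mul
      calc x + y < q * (x / q) + q * (y / q) + 2 * q := by omega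
        _ = q * (x / q + y / q + 2) := by ring
    omega

lemma sorted_getD_lt {L : List ℝ} (hs : L.Pairwise (· < ·)) {i j : ℕ}
    (hi : i < L.length) (hj : j < L.length) (hij : i < j) : L.getD i 0 < L.getD j 0 := by
  rw [List.getD_eq_getElem L 0 hi, List.getD_eq_getElem L 0 hj]
  rw [List.pairwise_iff_get] at hs
  exact hs ⟨i, hi⟩ ⟨j, hj⟩ hij

lemma sorted_getD_le {L : List ℝ} (hs : L.Pairwise (· < ·)) {i j : ℕ}
    (hi : i < L.length) (hj : j < L.length) (hij : i ≤ j) : L.getD i 0 ≤ L.getD j 0 := by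
  rcases Nat.lt_or_ge i j with h | h
  · exact le_of_lt (sorted_getD_lt hs hi hj h)
  · have : i = j := by omega
    subst this
    exact le_rfl

lemma sorted_lt_indexOf_iff {L : List ℝ} (hs : L.Pairwise (· < ·)) {z : ℝ} (hz : z ∈ L)
    {i : ℕ} (hi : i < L.length) :
    (L.getD i 0 < z ↔ i < L.idxOf z) ∧ (z < L.getD i 0 ↔ L.idxOf z < i) := by
  have hjz : L.idxOf z < L.length := List.idxOf_lt_length_iff.2 hz
  have hzeq : L.getD (L.idxOf z) 0 = z := by
    rw [List.getD_eq_getElem L 0 hjz, List.getElem_idxOf hjz]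
  constructor
  · constructor
    · intro h
      by_contra hc
      have : L.getD (L.idxOf z) 0 ≤ L.getD i 0 := sorted_getD_le hs hjz hi (by omega)
      rw [hzeq] at this
      exact absurd (lt_of_le_of_lt this h) (lt_irrefl _)
    · intro h
      have := sorted_getD_lt hs hi hjz h
      rwa [hzeq] at this
  · constructor
    · intro h
      by_contra hc
      have : L.getD i 0 ≤ L.getD (L.idxOf z) 0 := sorted_getD_le hs hi hjz (by omega)
      rw [hzeq] at this
      exact absurd (lt_of_lt_of_le h this) (lt_irrefl _)
    · intro h
      have := sorted_getD_lt hs hjz hi h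
      rwa [hzeq] at this

lemma rank_index_lt {n q j : ℕ} (hq : 0 < q) (hn : 0 < n) (hj : j < q - 1) :
    (j + 1) * n / q < n := by
  apply Nat.div_lt_of_lt_mul
  have h1 : j + 1 < q := by omega
  exact mul_lt_mul_of_pos_right h1 hn

lemma count_gap {tx : BT} (hbst : isBST tx) {k : ℕ} (hq : 2 ^ k ≤ size tx)
    {a b : Option ℝ}
    (hX : ∀ x ∈ rankElems tx k, ¬(olb a x ∧ oub x b))
    {S : Finset ℝ} (hsub : S ⊆ nodes tx) (hSX : ∀ z ∈ S, z ∉ rankElems tx k)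
    (hSb : ∀ z ∈ S, olb a z ∧ oub z b) :
    S.card * 2 ^ k ≤ size tx := by
  set q := 2 ^ k with hqdef
  set n := size tx with hndef
  set L := inorder tx with hLdef
  have hq0 : 0 < q := Nat.pow_pos (n := k) (by norm_num)
  have hn0 : 0 < n := lt_of_lt_of_le hq0 hq
  have hLlen : L.length = n := length_inorder tx
  have hLs : L.Pairwise (· < ·) := inorder_sorted_lt hbst
  rcases S.eq_empty_or_nonempty with rfl | ⟨z₀, hz₀⟩
  · simp
  have hmemL : ∀ z ∈ S, z ∈ L := fun z hz => (mem_inorder hbst).2 (hsub hz)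
  -- the rank elements as a function of j
  set g : ℕ → ℝ := fun j => L.getD ((j + 1) * n / q) 0 with hgdef
  have hglt : ∀ j, j < q - 1 → (j + 1) * n / q < L.length := by
    intro j hj
    rw [hLlen]
    exact rank_index_lt hq0 hn0 hj
  have hgmem : ∀ j, j < q - 1 → g j ∈ rankElems tx k := by
    intro j hj
    rw [rankElems]
    apply List.mem_map_of_mem
    exact List.mem_range.2 hj
  have hgmono : ∀ i j, i ≤ j → j < q - 1 → g i ≤ g j := by
    intro i j hij hj
    apply sorted_getD_le hLs (hglt i (by omega)) (hglt j hj)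
    exact Nat.div_le_div_right (Nat.mul_le_mul_right n (by omega))
  -- dichotomy
  have hdich : ∀ j, j < q - 1 → (∀ z ∈ S, g j < z) ∨ (∀ z ∈ S, z < g j) := by
    intro j hj
    rcases not_and_or.1 (hX (g j) (hgmem j hj)) with h | h
    · left
      intro z hz
      cases a with
      | none => exact absurd (olb_none _) h
      | some a₀ =>
        have h1 : a₀ < z := by
          have := (hSb z hz).1
          simpa using this
        have h2 : ¬ a₀ < g j := by simpa using h
        exact lt_of_le_of_lt (le_of_not_gt h2) h1
    · right
      intro z hz
      cases b with
      | none => exact absurd (oub_none _) h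
      | some b₀ =>
        have h1 : z < b₀ := by
          have := (hSb z hz).2
          simpa using this
        have h2 : ¬ g j < b₀ := by simpa using h
        exact lt_of_lt_of_le h1 (le_of_not_gt h2)
  set Tc := (Finset.range (q - 1)).filter (fun j => ∀ z ∈ S, g j < z) with hTcdef
  set c := Tc.card with hcdef
  have hcle : c ≤ q - 1 := by
    rw [hcdef]
    calc Tc.card ≤ (Finset.range (q-1)).card := Finset.card_le_card (Finset.filter_subset _ _)
      _ = q - 1 := Finset.card_range _
  have hc_iff : ∀ j, j < q - 1 → ((∀ z ∈ S, g j < z) ↔ j < c) := by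
    intro j hj
    constructor
    · intro hLft
      have hsubset : Finset.range (j + 1) ⊆ Tc := by
        intro i hi
        rw [Finset.mem_range] at hi
        rw [hTcdef, Finset.mem_filter, Finset.mem_range]
        refine ⟨by omega, fun z hz => lt_of_le_of_lt (hgmono i j (by omega) hj) (hLft z hz)⟩
      calc j + 1 = (Finset.range (j+1)).card := (Finset.card_range _).symm
        _ ≤ c := Finset.card_le_card hsubset
    · intro hjc
      by_contra hnp
      have hsubset : Tc ⊆ Finset.range j := by
        intro i hi
        rw [hTcdef, Finset.mem_filter, Finset.mem_range] at hi
        rw [Finset.mem_range]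
        by_contra hc2
        exact hnp (fun z hz => lt_of_le_of_lt (hgmono j i (by omega) hi.1) (hi.2 z hz))
      have := Finset.card_le_card hsubset
      rw [Finset.card_range] at this
      omega
  have hRight : ∀ j, j < q - 1 → c ≤ j → ∀ z ∈ S, z < g j := by
    intro j hj hcj
    rcases hdich j hj with h | h
    · exact absurd ((hc_iff j hj).1 h) (by omega)
    · exact h
  have hkey : ∀ (A B : ℕ), (∀ z ∈ S, A ≤ L.idxOf z ∧ L.idxOf z < B) →
      S.card ≤ B - A := by
    intro A B hb
    have hval : S.card = (S.image (fun z => L.idxOf z)).card := by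
      rw [Finset.card_image_of_injOn]
      intro y hy z hz hyz
      simp only at hyz
      have hy1 : L.idxOf y < L.length := List.idxOf_lt_length_iff.2 (hmemL y hy)
      have hz1 : L.idxOf z < L.length := List.idxOf_lt_length_iff.2 (hmemL z hz)
      have h5 := List.getElem_idxOf hy1
      simp only [hyz] at h5
      rw [List.getElem_idxOf hz1] at h5
      exact h5.symm
    rw [hval]
    have hss : S.image (fun z => L.idxOf z) ⊆ Finset.Ico A B := by
      intro i hi
      rw [Finset.mem_image] at hi
      obtain ⟨z, hz, rfl⟩ := hi
      rw [Finset.mem_Ico]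
      exact hb z hz
    calc (S.image (fun z => L.idxOf z)).card ≤ (Finset.Ico A B).card :=
        Finset.card_le_card hss
      _ = B - A := Nat.card_Ico A B
  have hlow : 0 < c → ∀ z ∈ S, c * n / q + 1 ≤ L.idxOf z := by
    intro hc0 z hz
    have hcq : c - 1 < q - 1 := by omega
    have hLft : g (c - 1) < z := (hc_iff (c - 1) hcq).2 (by omega) z hz
    have hconv := ((sorted_lt_indexOf_iff hLs (hmemL z hz) (hglt (c - 1) hcq)).1).1 hLft
    have hceq : c - 1 + 1 = c := by omega
    rw [hceq] at hconv
    omega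
  have hupp : c < q - 1 → ∀ z ∈ S, L.idxOf z < (c + 1) * n / q := by
    intro hcq z hz
    have hRgt : z < g c := hRight c hcq le_rfl z hz
    exact ((sorted_lt_indexOf_iff hLs (hmemL z hz) (hglt c hcq)).2).1 hRgt
  have huppn : ∀ z ∈ S, L.idxOf z < n := by
    intro z hz
    rw [← hLlen]
    exact List.idxOf_lt_length_iff.2 (hmemL z hz)
  have hfin : S.card ≤ n / q := by
    by_cases hc0 : 0 < c
    · by_cases hcq : c < q - 1
      · have hcard := hkey (c * n / q + 1) ((c + 1) * n / q)
          (fun z hz => ⟨hlow hc0 z hz, hupp hcq z hz⟩)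
        have h1 : (c + 1) * n = c * n + n := by ring
        have h2 := nat_div_add_le (c * n) n q
        rw [← h1] at h2
        generalize hXg : (c + 1) * n / q = X at h2 hcard
        generalize hYg : c * n / q = Y at h2 hcard
        generalize hZg : n / q = Z at h2 ⊢
        omega
      · have hcard := hkey (c * n / q + 1) n
          (fun z hz => ⟨hlow hc0 z hz, huppn z hz⟩)
        have hceq : c = q - 1 := by omega
        have h1 : (q - 1) * n + n = q * n := by
          have h0 : q - 1 + 1 = q := by omega
          calc (q - 1) * n + n = (q - 1 + 1) * n := by ring
            _ = q * n := by rw [h0]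
        have h2 := nat_div_add_le ((q - 1) * n) n q
        rw [h1, Nat.mul_div_cancel_left n hq0] at h2
        rw [hceq] at hcard
        generalize hYg : (q - 1) * n / q = Y at h2 hcard
        generalize hZg : n / q = Z at h2 ⊢
        omega
    · by_cases hcq : c < q - 1
      · have hcard := hkey 0 ((c + 1) * n / q)
          (fun z hz => ⟨Nat.zero_le _, hupp hcq z hz⟩)
        have hceq : c = 0 := by omega
        rw [hceq] at hcard
        simpa using hcard
      · have hq1 : q = 1 := by omega
        have hcard := hkey 0 n (fun z hz => ⟨Nat.zero_le _, huppn z hz⟩)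
        rw [hq1]
        simpa using hcard
  calc S.card * q ≤ (n / q) * q := Nat.mul_le_mul_right q hfin
    _ ≤ n := Nat.div_mul_le_self n q

lemma rankElems_subset {tx : BT} (hbst : isBST tx) {k : ℕ} (hn : 0 < size tx) :
    ∀ x ∈ rankElems tx k, x ∈ nodes tx := by
  intro x hx
  rw [rankElems] at hx
  obtain ⟨j, hj, rfl⟩ := List.mem_map.1 hx
  rw [List.mem_range] at hj
  have hidx : (j + 1) * size tx / 2 ^ k < (inorder tx).length := by
    rw [length_inorder]
    exact rank_index_lt (Nat.pow_pos (n := k) (by norm_num)) hn hj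
  rw [← mem_inorder hbst, List.getD_eq_getElem _ 0 hidx]
  exact List.getElem_mem _

end BT
namespace BT

lemma balance_result_spec {t : BT} (ht : isBST t) {x : ℝ} (hx : x ∈ t.nodes)
    {k : ℕ} (hk : 1 ≤ k) {s' : BT} (hres : IsBalanceResult k (subtreeAt t x) s') :
    isBST s' ∧ nodes s' = nodes (subtreeAt t x) ∧
    height s' ≤ height (subtreeAt t x) + 1 ∧
    (∀ z ∈ nodes s', (sig s' z).length = k + 1 →
      size (subtreeAt s' z) * 2 ^ k ≤ size (subtreeAt t x)) := by
  set tx := subtreeAt t x with htx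
  have hbtx : isBST tx := isBST_subtreeAt ht x
  have hxtx : x ∈ nodes tx := mem_subtreeAt ht hx
  by_cases hsmall : size tx < 2 ^ k
  · rw [IsBalanceResult, if_pos hsmall] at hres
    obtain ⟨hbs, hns, hhs⟩ := hres
    have hsz : size s' = size tx := by
      rw [size_eq_card hbs, size_eq_card hbtx, hns]
    have hszpos : 0 < size tx := by
      rw [size_eq_card hbtx]
      exact Finset.card_pos.2 ⟨x, hxtx⟩
    have hlog : height s' < k := by
      rw [hhs, hsz]
      exact Nat.log_lt_of_lt_pow (by omega) hsmall
    have hloh : height s' ≤ height tx := by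
      rw [hhs, hsz]
      exact log_size_le_height hbtx
    refine ⟨hbs, hns, by omega, ?_⟩
    intro z hz hlen
    have := sig_length_le_height hz
    omega
  · rw [IsBalanceResult, if_neg hsmall] at hres
    obtain ⟨t0, ⟨hbt0, hnt0, hht0⟩, hs'eq⟩ := hres
    push_neg at hsmall
    set q := 2 ^ k with hqdef
    set n := size tx with hndef
    have hq0 : 0 < q := Nat.pow_pos (n := k) (by norm_num)
    have hn0 : 0 < n := lt_of_lt_of_le hq0 hsmall
    set XL := rankElems tx k with hXLdef
    have hXsub : ∀ x' ∈ XL, x' ∈ nodes tx := rankElems_subset hbtx hn0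
    set N := (nodes tx).filter (fun z => z ∉ XL ∧ z ∉ shallowNodes tx k) with hNdef
    have hNsub : N ⊆ nodes tx := Finset.filter_subset _ _
    -- the Fits statement from slf
    have hfits := slf N XL k (height tx) k 0 tx none none hbtx (by omega)
      (fun z _ => ⟨olb_none z, oub_none z⟩) ?_ ?_
    rotate_left
    · ext z
      simp only [hNdef, Finset.mem_filter, olb_none, oub_none, and_true, true_and]
    · intro z hz
      simpa using sig_length_le_height hz
    -- identification of the W list
    have hXfs : (nodes tx).filter (fun z => z ∈ XL) = XL.toFinset := by
      ext z
      simp only [Finset.mem_filter, List.mem_toFinset]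
      exact ⟨fun h => h.2, fun h => ⟨hXsub z h, h⟩⟩
    have hW : shallowNodes tx k ∪ (nodes tx).filter (fun z => z ∈ XL) = nodes t0 := by
      rw [hXfs, hnt0]
    rw [hW] at hfits
    have hparts : ((slots k tx).flatMap fun ti =>
        multiSplit ti ((inorder ti).filter fun z => z ∈ XL)) = balParts tx k := rfl
    rw [hparts] at hfits
    -- glue
    have hdisj : ∀ z ∈ N, z ∉ nodes t0 := by
      intro z hz
      rw [hNdef, Finset.mem_filter] at hz
      rw [hnt0]
      intro hc
      rcases Finset.mem_union.1 hc with hc | hc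
      · exact hz.2.2 hc
      · exact hz.2.1 (List.mem_toFinset.1 hc)
    obtain ⟨G1, G2, G3, G4⟩ := glue_main N (QBal k (height tx)) (fun P hP => hP.1)
      t0 none none (balParts tx k) hbt0 (fun z _ => ⟨olb_none z, oub_none z⟩) hdisj hfits
    have hNf : N.filter (fun z => olb none z ∧ oub z none) = N := by
      apply Finset.filter_true_of_mem
      intro z _
      exact ⟨olb_none z, oub_none z⟩
    rw [hNf] at G2 G4
    rw [← hs'eq] at G1 G2 G3 G4
    -- nodes s' = nodes tx
    have hns : nodes s' = nodes tx := by
      rw [G2, hnt0]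
      ext z
      simp only [Finset.mem_union, hNdef, Finset.mem_filter, List.mem_toFinset]
      constructor
      · rintro ((hz | hz) | hz)
        · exact shallow_subset tx k hz
        · exact hXsub z hz
        · exact hz.1
      · intro hz
        by_cases h1 : z ∈ shallowNodes tx k
        · exact Or.inl (Or.inl h1)
        · by_cases h2 : z ∈ XL
          · exact Or.inl (Or.inr h2)
          · exact Or.inr ⟨hz, h2, h1⟩
    -- height t0 ≤ k
    have hcardt0 : size t0 < 2 ^ (k + 1) := by
      rw [size_eq_card hbt0, hnt0]
      have h1 := card_shallow_lt k tx hbtx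
      have h2 : XL.toFinset.card ≤ q - 1 := by
        calc XL.toFinset.card ≤ XL.length := XL.toFinset_card_le
          _ = q - 1 := by rw [hXLdef, rankElems, List.length_map, List.length_range]
      have h3 := Finset.card_union_le (shallowNodes tx k) XL.toFinset
      have : (2:ℕ) ^ (k+1) = 2^k + 2^k := by ring
      omega
    have hht0k : height t0 ≤ k := by
      rw [hht0]
      rcases Nat.eq_zero_or_pos (size t0) with h0 | h0
      · simp [h0]
      · have := Nat.log_lt_of_lt_pow (by omega : size t0 ≠ 0) hcardt0
        omega
    have hkh : k ≤ height tx := by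
      have h1 := size_lt_two_pow hbtx
      have h2 : (2:ℕ) ^ k < 2 ^ (height tx + 1) := lt_of_le_of_lt hsmall h1
      have := (Nat.pow_lt_pow_iff_right (by norm_num : 1 < 2)).1 h2
      omega
    -- height bound
    have hhs : height s' ≤ height tx + 1 := by
      apply height_le
      intro z hz
      rw [G2] at hz
      rcases Finset.mem_union.1 hz with hz | hz
      · rw [G3 z hz]
        have := sig_length_le_height hz
        omega
      · obtain ⟨P, hPmem, hPQ, hPz, hPsub, hPsig⟩ := G4 z hz
        have h1 := hPQ.2 z hPz
        have h2 := extH_le_height hbt0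
        omega
    refine ⟨G1, hns, hhs, ?_⟩
    -- part 2
    intro z hz hlen
    have hznt0 : z ∉ nodes t0 := by
      intro hc
      have := sig_length_le_height hc
      rw [← G3 z hc] at this
      omega
    have hzN : z ∈ N := by
      rw [G2] at hz
      rcases Finset.mem_union.1 hz with hz | hz
      · exact absurd hz hznt0
      · exact hz
    obtain ⟨P, hPmem, hPQ, hPz, hPsub, hPsig⟩ := G4 z hzN
    rw [hPsub]
    obtain ⟨a, b, _, hPn, _, _, hPgap⟩ := Fits.mem_piece hfits hPmem
    have hcount : (nodes P).card * 2 ^ k ≤ size tx := by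
      apply count_gap hbtx hsmall (a := a) (b := b)
      · intro x' hx'
        apply hPgap
        rw [Finset.mem_sort]
        rw [hnt0]
        exact Finset.mem_union_right _ (List.mem_toFinset.2 hx')
      · rw [hPn]
        exact (Finset.filter_subset _ _).trans hNsub
      · intro z' hz'
        rw [hPn, Finset.mem_filter, hNdef, Finset.mem_filter] at hz'
        exact hz'.1.2.1
      · intro z' hz'
        rw [hPn, Finset.mem_filter] at hz'
        exact hz'.2
    calc size (subtreeAt P z) * 2 ^ k ≤ size P * 2 ^ k :=
        Nat.mul_le_mul_right _ (size_subtreeAt_le P z)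
      _ = (nodes P).card * 2 ^ k := by rw [size_eq_card hPQ.1]
      _ ≤ size tx := hcount

end BT

/-- properties of `Balance(x, k)`: if `t'` is obtained from `t` by
applying `Balance(x, k)`, then (1) `h(T') ≤ h(T) + 1`, and (2) every `T'`-descendant `z`
of `x` at depth `d_T(x) + k + 1` in `T'` roots a subtree of `T'` of size at most
`|T_x| / 2^k`. -/
theorem balance_properties (t : BT) (ht : t.isBST) (x : ℝ) (hx : x ∈ t.nodes)
    (k : ℕ) (hk : 1 ≤ k) (t' : BT) (hbal : BT.BalanceRel t x k t') :
    t'.height ≤ t.height + 1 ∧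
    ∀ z ∈ t'.nodes, t'.sig x <+: t'.sig z →
      (t'.sig z).length = (t.sig x).length + k + 1 →
      (t'.subtreeAt z).size * 2 ^ k ≤ (t.subtreeAt x).size := by
  obtain ⟨s', hres, rfl⟩ := hbal
  obtain ⟨hA, hB, hC, hD⟩ := BT.balance_result_spec ht hx hk hres
  obtain ⟨R1, R2, R3, R4⟩ := BT.replace_spec ht hx hA hB
  have hxs' : x ∈ s'.nodes := by
    rw [hB]
    exact BT.mem_subtreeAt ht hx
  constructor
  · apply BT.height_le
    intro z hz
    rw [R1] at hz
    by_cases hzs : z ∈ s'.nodes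
    · rw [(R3 z hzs).1]
      rw [List.length_append]
      have h1 : (s'.sig z).length ≤ s'.height := BT.sig_length_le_height hzs
      have h2 : (t.sig x).length + (t.subtreeAt x).height ≤ t.height :=
        BT.depth_add_height_le ht hx
      omega
    · rw [R4 z hz hzs]
      have := BT.sig_length_le_height hz
      omega
  · intro z hz hpre hlen
    rw [R1] at hz
    by_cases hzs : z ∈ s'.nodes
    · have hsz := (R3 z hzs).1
      have hlz : (s'.sig z).length = k + 1 := by
        rw [hsz, List.length_append] at hlen
        omega
      rw [(R3 z hzs).2]
      exact hD z hzs hlz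
    · exfalso
      rw [R4 z hz hzs, (R3 x hxs').1] at hpre
      have hpre' : t.sig x <+: t.sig z := (List.prefix_append _ _).trans hpre
      exact hzs (hB ▸ (BT.prefix_iff_mem_subtreeAt ht hx hz).1 hpre')
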